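/- arXiv:1402.3909 — 7 statements merged into one kernel-verified Lean document; each statement's English description precedes it below -/
import Mathlib

section
/- Let M be a matroid of rank k, S₁ a p₁-family of independent sets, S₂ a p₂-family of independent sets. If Ŝ₁ is (k−p₁)-representative for S₁ and Ŝ₂ is (k−p₂)-representative for S₂, then Ŝ₁ • Ŝ₂ is (k−p₁−p₂)-representative for S₁ • S₂. -/
/-- `q`-representative subfamily. -/
def IsRepFamily {α : Type*} (M : Matroid α) (q : ℕ) (S' S : Set (Set α)) : Prop :=
  S' ⊆ S ∧ ∀ Y : Set α, Y ⊆ M.E → Y.Finite → Y.ncard ≤ q →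
    (∃ X ∈ S, Disjoint X Y ∧ M.Indep (X ∪ Y)) →
    ∃ X' ∈ S', Disjoint X' Y ∧ M.Indep (X' ∪ Y)

/-- The product `L₁ • L₂` of two families of independent sets of a matroid. -/
def bulletProd {α : Type*} (M : Matroid α) (L₁ L₂ : Set (Set α)) : Set (Set α) :=
  {Z | ∃ X ∈ L₁, ∃ Y ∈ L₂, Disjoint X Y ∧ M.Indep (X ∪ Y) ∧ Z = X ∪ Y}

private lemma indep_finite_card {α : Type*} {M : Matroid α} {k : ℕ} {I : Set α}
    (hrank : ∃ B, M.IsBase B ∧ B.Finite ∧ B.ncard = k) (hI : M.Indep I) :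
    I.Finite ∧ I.ncard ≤ k := by
  obtain ⟨B, hB, hBfin, hBk⟩ := hrank
  obtain ⟨B', hB', hIB'⟩ := hI.exists_isBase_superset
  have hB'fin : B'.Finite := hB.finite_of_finite hBfin hB'
  refine ⟨hB'fin.subset hIB', ?_⟩
  calc I.ncard ≤ B'.ncard := Set.ncard_le_ncard hIB' hB'fin
    _ = B.ncard := hB'.ncard_eq_ncard_of_isBase hB
    _ = k := hBk

/-- If `M` has rank `k`, `S₁` is a `p₁`-family of independent sets, `S₂` a `p₂`-family of
independent sets, `Ŝ₁` is `(k−p₁)`-representative for `S₁`, and `Ŝ₂` is `(k−p₂)`-representative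
for `S₂`, then `Ŝ₁ • Ŝ₂` is `(k−p₁−p₂)`-representative for `S₁ • S₂`. -/
theorem repFamily_bulletProd {α : Type*} (M : Matroid α) (k p₁ p₂ : ℕ)
    (hrank : ∃ B, M.IsBase B ∧ B.Finite ∧ B.ncard = k)
    (S₁ S₂ Shat₁ Shat₂ : Set (Set α))
    (hS₁ : ∀ X ∈ S₁, M.Indep X ∧ X.ncard = p₁)
    (hS₂ : ∀ X ∈ S₂, M.Indep X ∧ X.ncard = p₂)
    (h1 : IsRepFamily M (k - p₁) Shat₁ S₁)
    (h2 : IsRepFamily M (k - p₂) Shat₂ S₂) :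
    IsRepFamily M (k - p₁ - p₂) (bulletProd M Shat₁ Shat₂) (bulletProd M S₁ S₂) := by
  constructor
  · rintro Z ⟨X, hX, Y, hY, hd, hi, rfl⟩
    exact ⟨X, h1.1 hX, Y, h2.1 hY, hd, hi, rfl⟩
  rintro Y hYE hYfin hYcard ⟨Z, ⟨X₁, hX₁, X₂, hX₂, hd12, hi12, rfl⟩, hdZY, hiZY⟩
  obtain ⟨hi₁, hc₁⟩ := hS₁ X₁ hX₁
  obtain ⟨hi₂, hc₂⟩ := hS₂ X₂ hX₂
  obtain ⟨hf₁, -⟩ := indep_finite_card hrank hi₁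
  obtain ⟨hf₂, -⟩ := indep_finite_card hrank hi₂
  obtain ⟨hf₁₂, hk₁₂⟩ := indep_finite_card hrank hi12
  have hsum : p₁ + p₂ ≤ k := by
    have := Set.ncard_union_eq hd12 hf₁ hf₂
    omega
  have hd1Y : Disjoint X₁ Y := (Set.disjoint_union_left.mp hdZY).1
  have hd2Y : Disjoint X₂ Y := (Set.disjoint_union_left.mp hdZY).2
  -- first replace X₂ using h2 with test set X₁ ∪ Y
  have hstep2 : ∃ X₂' ∈ Shat₂, Disjoint X₂' (X₁ ∪ Y) ∧ M.Indep (X₂' ∪ (X₁ ∪ Y)) := by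
    apply h2.2 (X₁ ∪ Y) (Set.union_subset hi₁.subset_ground hYE) (hf₁.union hYfin)
    · have := Set.ncard_union_le X₁ Y
      omega
    · refine ⟨X₂, hX₂, ?_, ?_⟩
      · exact Set.disjoint_union_right.mpr ⟨hd12.symm, hd2Y⟩
      · have : X₂ ∪ (X₁ ∪ Y) = (X₁ ∪ X₂) ∪ Y := by
          rw [Set.union_comm X₂, Set.union_assoc, Set.union_comm Y X₂, ← Set.union_assoc]
        rwa [this]
  obtain ⟨X₂', hX₂', hd2', hi2'⟩ := hstep2
  obtain ⟨hi₂', hc₂'⟩ := hS₂ X₂' (h2.1 hX₂')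
  obtain ⟨hf₂', -⟩ := indep_finite_card hrank hi₂'
  -- now replace X₁ using h1 with test set X₂' ∪ Y
  have hstep1 : ∃ X₁' ∈ Shat₁, Disjoint X₁' (X₂' ∪ Y) ∧ M.Indep (X₁' ∪ (X₂' ∪ Y)) := by
    apply h1.2 (X₂' ∪ Y) (Set.union_subset hi₂'.subset_ground hYE) (hf₂'.union hYfin)
    · have := Set.ncard_union_le X₂' Y
      omega
    · refine ⟨X₁, hX₁, ?_, ?_⟩
      · exact Set.disjoint_union_right.mpr
          ⟨(Set.disjoint_union_right.mp hd2').1.symm, hd1Y⟩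
      · have : X₁ ∪ (X₂' ∪ Y) = X₂' ∪ (X₁ ∪ Y) := by
          rw [← Set.union_assoc, Set.union_comm X₁ X₂', Set.union_assoc]
        rwa [this]
  obtain ⟨X₁', hX₁', hd1', hi1'⟩ := hstep1
  have hd1'2' : Disjoint X₁' X₂' := (Set.disjoint_union_right.mp hd1').1
  have hd1'Y : Disjoint X₁' Y := (Set.disjoint_union_right.mp hd1').2
  have hd2'Y : Disjoint X₂' Y := (Set.disjoint_union_right.mp hd2').2
  have hi' : M.Indep (X₁' ∪ X₂' ∪ Y) := by
    rwa [Set.union_assoc]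
  refine ⟨X₁' ∪ X₂', ⟨X₁', hX₁', X₂', hX₂', hd1'2',
    hi'.subset (by intro x hx; exact Or.inl hx), rfl⟩, ?_, hi'⟩
  exact Set.disjoint_union_left.mpr ⟨hd1'Y, hd2'Y⟩
end

section
/- For a uniform matroid over a ground set of size n with rank p+q, and any p-family S of subsets, there exists a q-representative subfamily of S of size at most C(p+q, p). -/
open Finset

/-- Permutation of `Fin (p+q')` sending the first `p` indices onto `T` (order-preservingly). -/
def piBij (p q' : ℕ) (T : Finset (Fin (p + q'))) (hT : T.card = p) :
    Equiv.Perm (Fin (p + q')) :=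
  finSumFinEquiv.symm.trans <|
    (Equiv.sumCongr (T.orderIsoOfFin hT).toEquiv
      ((Tᶜ).orderIsoOfFin (by rw [Finset.card_compl, hT, Fintype.card_fin]; omega)).toEquiv).trans <|
      ((Equiv.sumCongr (Equiv.refl _)
        (Equiv.subtypeEquivRight (fun i => Finset.mem_compl))).trans
        (Equiv.sumCompl (· ∈ T)))

lemma piBij_mem (p q' : ℕ) (T : Finset (Fin (p + q'))) (hT : T.card = p) (i : Fin (p + q')) :
    piBij p q' T hT i ∈ T ↔ (i : ℕ) < p := by
  by_cases h : (i : ℕ) < p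
  · have hi : i = Fin.castAdd q' ⟨(i : ℕ), h⟩ := by ext; rfl
    rw [hi]
    simp only [piBij, Equiv.trans_apply, finSumFinEquiv_symm_apply_castAdd,
      Equiv.sumCongr_apply, Sum.map_inl, Equiv.sumCompl_apply_inl, Equiv.refl_apply]
    exact iff_of_true (Finset.coe_mem _) h
  · have h2 : (i : ℕ) - p < q' := by omega
    have hi : i = Fin.natAdd p ⟨(i : ℕ) - p, h2⟩ := by ext; simp; omega
    rw [hi]
    simp only [piBij, Equiv.trans_apply, finSumFinEquiv_symm_apply_natAdd,
      Equiv.sumCongr_apply, Sum.map_inr, Equiv.sumCompl_apply_inr, Equiv.subtypeEquivRight_apply]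
    refine iff_of_false (fun hmem => Finset.mem_compl.mp (Finset.coe_mem _) hmem) (by simp)

/-- Permutation of `Fin n` that rearranges the elements of `P` so that the positions indexed
by `T` move to the first `p` slots of `P`, identity outside `P`. -/
def chiPerm (n p q' : ℕ) (P : Finset (Fin n)) (hP : P.card = p + q')
    (T : Finset (Fin (p + q'))) (hT : T.card = p) : Equiv.Perm (Fin n) :=
  Equiv.Perm.subtypeCongr
    ((P.orderIsoOfFin hP).toEquiv.symm.trans
      ((piBij p q' T hT).symm.trans (P.orderIsoOfFin hP).toEquiv))
    (Equiv.refl _)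

lemma chiPerm_congr {n p q' : ℕ} {P₁ P₂ : Finset (Fin n)} {hP₁ : P₁.card = p + q'}
    {hP₂ : P₂.card = p + q'} {T₁ T₂ : Finset (Fin (p + q'))} {hT₁ : T₁.card = p}
    {hT₂ : T₂.card = p} (h1 : P₁ = P₂) (h2 : T₁ = T₂) :
    chiPerm n p q' P₁ hP₁ T₁ hT₁ = chiPerm n p q' P₂ hP₂ T₂ hT₂ := by
  subst h1; subst h2; rfl

lemma chiPerm_mem {n p q' : ℕ} (P : Finset (Fin n)) (hP : P.card = p + q')
    (T : Finset (Fin (p + q'))) (hT : T.card = p) {x : Fin n} (hx : x ∈ P) :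
    chiPerm n p q' P hP T hT x ∈ P := by
  rw [chiPerm, Equiv.Perm.subtypeCongr.left_apply _ _ hx]
  exact Finset.coe_mem _

lemma chiPerm_lt {n p q' : ℕ} (P : Finset (Fin n)) (hP : P.card = p + q')
    (T : Finset (Fin (p + q'))) (hT : T.card = p) {x y : Fin n} (hx : x ∈ P) (hy : y ∈ P)
    (hxT : (P.orderIsoOfFin hP).symm ⟨x, hx⟩ ∈ T)
    (hyT : (P.orderIsoOfFin hP).symm ⟨y, hy⟩ ∉ T) :
    chiPerm n p q' P hP T hT x < chiPerm n p q' P hP T hT y := by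
  rw [chiPerm, Equiv.Perm.subtypeCongr.left_apply _ _ hx,
    Equiv.Perm.subtypeCongr.left_apply _ _ hy]
  simp only [Equiv.trans_apply, OrderIso.toEquiv_symm]
  set i := (piBij p q' T hT).symm ((P.orderIsoOfFin hP).symm ⟨x, hx⟩) with hidef
  set j := (piBij p q' T hT).symm ((P.orderIsoOfFin hP).symm ⟨y, hy⟩) with hjdef
  have hi : (i : ℕ) < p := by
    rw [← piBij_mem p q' T hT i]
    simpa [hidef] using hxT
  have hj : ¬ (j : ℕ) < p := by
    rw [← piBij_mem p q' T hT j]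
    simpa [hjdef] using hyT
  have hij : i < j := by omega
  exact Subtype.coe_lt_coe.mpr ((P.orderIsoOfFin hP).lt_iff_lt.mpr hij)

lemma chiPerm_image {n p q' : ℕ} (P : Finset (Fin n)) (hP : P.card = p + q')
    (T : Finset (Fin (p + q'))) (hT : T.card = p) :
    P.image (chiPerm n p q' P hP T hT) = P := by
  apply Finset.eq_of_subset_of_card_le
  · exact Finset.image_subset_iff.mpr (fun x hx => chiPerm_mem P hP T hT hx)
  · rw [Finset.card_image_of_injective _ (Equiv.injective _)]

lemma count_le {α : Type*} [DecidableEq α] [Fintype α] (n p q' : ℕ)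
    (hcard : Fintype.card α = n) (X Y : Finset α) (hXY : Disjoint X Y)
    (hX : X.card = p) (hY : Y.card = q') :
    Fintype.card (α ≃ Fin n) ≤
      (Finset.univ.filter (fun σ : α ≃ Fin n => ∀ a ∈ X, ∀ b ∈ Y, σ a < σ b)).card *
        (p + q').choose p := by
  classical
  have hU : (X ∪ Y).card = p + q' := by
    rw [Finset.card_union_of_disjoint hXY, hX, hY]
  have hPf : ∀ σ : α ≃ Fin n, ((X ∪ Y).image σ).card = p + q' := fun σ => by
    rw [Finset.card_image_of_injective _ σ.injective, hU]
  set Tf : (α ≃ Fin n) → Finset (Fin (p + q')) := fun σ =>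
    Finset.univ.filter (fun i => ↑(((X ∪ Y).image σ).orderIsoOfFin (hPf σ) i) ∈ X.image σ)
    with hTfdef
  have hTmem : ∀ (σ : α ≃ Fin n) (i : Fin (p + q')),
      i ∈ Tf σ ↔ ↑(((X ∪ Y).image σ).orderIsoOfFin (hPf σ) i) ∈ X.image σ := by
    intro σ i; simp [hTfdef]
  have hXP : ∀ (σ : α ≃ Fin n) {x : Fin n}, x ∈ X.image σ → x ∈ (X ∪ Y).image σ := by
    intro σ x hx; exact Finset.image_subset_image Finset.subset_union_left hx
  have hsymmT : ∀ (σ : α ≃ Fin n) {x : Fin n} (hx : x ∈ (X ∪ Y).image σ),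
      (((X ∪ Y).image σ).orderIsoOfFin (hPf σ)).symm ⟨x, hx⟩ ∈ Tf σ ↔ x ∈ X.image σ := by
    intro σ x hx
    rw [hTmem]
    simp
  have hTf : ∀ σ : α ≃ Fin n, (Tf σ).card = p := by
    intro σ
    have key : (Tf σ).card = (X.image σ).card := by
      apply Finset.card_bij (fun i _ => (↑(((X ∪ Y).image σ).orderIsoOfFin (hPf σ) i) : Fin n))
      · intro i hi; exact (hTmem σ i).mp hi
      · intro i₁ h₁ i₂ h₂ h
        exact (((X ∪ Y).image σ).orderIsoOfFin (hPf σ)).injective (Subtype.ext h)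
      · intro x hx
        refine ⟨(((X ∪ Y).image σ).orderIsoOfFin (hPf σ)).symm ⟨x, hXP σ hx⟩, ?_, ?_⟩
        · exact (hsymmT σ (hXP σ hx)).mpr hx
        · simp
    rw [key, Finset.card_image_of_injective X σ.injective, hX]
  set G : (α ≃ Fin n) → (α ≃ Fin n) × Finset (Fin (p + q')) := fun σ =>
    (σ.trans (chiPerm n p q' ((X ∪ Y).image σ) (hPf σ) (Tf σ) (hTf σ)), Tf σ) with hGdef
  have hnotX : ∀ (σ : α ≃ Fin n) {b : α}, b ∈ Y → σ b ∉ X.image σ := by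
    intro σ b hb hmem
    obtain ⟨a, ha, hab⟩ := Finset.mem_image.mp hmem
    exact Finset.disjoint_left.mp hXY (σ.injective hab ▸ ha) hb
  have hmaps : ∀ σ : α ≃ Fin n,
      (G σ).1 ∈ Finset.univ.filter (fun σ : α ≃ Fin n => ∀ a ∈ X, ∀ b ∈ Y, σ a < σ b) := by
    intro σ
    rw [Finset.mem_filter]
    refine ⟨Finset.mem_univ _, fun a ha b hb => ?_⟩
    show chiPerm n p q' _ (hPf σ) _ (hTf σ) (σ a) < chiPerm n p q' _ (hPf σ) _ (hTf σ) (σ b)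
    have haP : σ a ∈ (X ∪ Y).image σ := hXP σ (Finset.mem_image_of_mem _ ha)
    have hbP : σ b ∈ (X ∪ Y).image σ :=
      Finset.image_subset_image Finset.subset_union_right (Finset.mem_image_of_mem _ hb)
    exact chiPerm_lt _ (hPf σ) _ (hTf σ) haP hbP
      ((hsymmT σ haP).mpr (Finset.mem_image_of_mem _ ha))
      (fun h => hnotX σ hb ((hsymmT σ hbP).mp h))
  have himg : ∀ σ : α ≃ Fin n, (X ∪ Y).image ((G σ).1) = (X ∪ Y).image σ := by
    intro σ
    show (X ∪ Y).image (⇑(chiPerm n p q' _ (hPf σ) _ (hTf σ)) ∘ ⇑σ) = _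
    rw [← Finset.image_image, chiPerm_image]
  have hinj : Set.InjOn G Set.univ := by
    intro σ₁ _ σ₂ _ h
    have hT' : Tf σ₁ = Tf σ₂ := congrArg Prod.snd h
    have hσ' : (G σ₁).1 = (G σ₂).1 := congrArg Prod.fst h
    have hP' : (X ∪ Y).image σ₁ = (X ∪ Y).image σ₂ := by
      rw [← himg σ₁, ← himg σ₂, hσ']
    have hchi : chiPerm n p q' ((X ∪ Y).image σ₁) (hPf σ₁) (Tf σ₁) (hTf σ₁)
        = chiPerm n p q' ((X ∪ Y).image σ₂) (hPf σ₂) (Tf σ₂) (hTf σ₂) :=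
      chiPerm_congr hP' hT'
    have h2 : σ₁.trans (chiPerm n p q' ((X ∪ Y).image σ₁) (hPf σ₁) (Tf σ₁) (hTf σ₁))
        = σ₂.trans (chiPerm n p q' ((X ∪ Y).image σ₂) (hPf σ₂) (Tf σ₂) (hTf σ₂)) := hσ'
    rw [hchi] at h2
    apply Equiv.ext; intro a
    have h3 := congrArg (fun e : α ≃ Fin n =>
      (chiPerm n p q' ((X ∪ Y).image σ₂) (hPf σ₂) (Tf σ₂) (hTf σ₂)).symm (e a)) h2
    simpa using h3
  calc Fintype.card (α ≃ Fin n) = (Finset.univ : Finset (α ≃ Fin n)).card :=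
        Finset.card_univ.symm
    _ ≤ ((Finset.univ.filter (fun σ : α ≃ Fin n => ∀ a ∈ X, ∀ b ∈ Y, σ a < σ b)) ×ˢ
          (Finset.univ : Finset (Fin (p + q'))).powersetCard p).card := by
        apply Finset.card_le_card_of_injOn G
        · intro σ _
          exact Finset.mem_product.mpr ⟨hmaps σ,
            Finset.mem_powersetCard.mpr ⟨Finset.subset_univ _, hTf σ⟩⟩
        · intro σ₁ _ σ₂ _ h
          exact hinj (Set.mem_univ _) (Set.mem_univ _) h
    _ = _ := by
        rw [Finset.card_product, Finset.card_powersetCard, Finset.card_univ, Fintype.card_fin]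




/-- For the uniform matroid of rank `p+q` over a ground set of size `n`, every `p`-family `S`
of subsets has a `q`-representative subfamily of size at most `C(p+q, p)`: a subfamily `S'`
such that for every `Y` of size at most `q`, if some `X ∈ S` is disjoint from `Y` then some
`X' ∈ S'` is disjoint from `Y`. -/
theorem exists_repFamily_uniform {α : Type*} [DecidableEq α] [Fintype α] (n p q : ℕ)
    (hcard : Fintype.card α = n)
    (S : Finset (Finset α)) (hS : ∀ X ∈ S, X.card = p) :
    ∃ S' ⊆ S, S'.card ≤ (p + q).choose p ∧
      ∀ Y : Finset α, Y.card ≤ q →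
        (∃ X ∈ S, Disjoint X Y) → ∃ X' ∈ S', Disjoint X' Y := by
  classical
  set Good : Finset (Finset α) → Prop := fun T =>
    ∀ Y : Finset α, Y.card ≤ q → (∃ X ∈ S, Disjoint X Y) → ∃ X' ∈ T, Disjoint X' Y with hGood
  have hSmem : S ∈ S.powerset.filter Good := by
    rw [Finset.mem_filter, Finset.mem_powerset]
    exact ⟨Finset.Subset.refl _, fun Y hY h => h⟩
  obtain ⟨S', hS'mem, hmin⟩ := Finset.exists_min_image (S.powerset.filter Good)
    (fun T => T.card) ⟨S, hSmem⟩
  rw [Finset.mem_filter, Finset.mem_powerset] at hS'mem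
  obtain ⟨hsub, hgood⟩ := hS'mem
  refine ⟨S', hsub, ?_, hgood⟩
  -- witnesses from minimality
  have hwit : ∀ X ∈ S', ∃ Y : Finset α, Y.card ≤ q ∧ Disjoint X Y ∧
      ∀ X' ∈ S', X' ≠ X → ¬ Disjoint X' Y := by
    intro X hX
    have herase : ¬ Good (S'.erase X) := by
      intro hG
      have hmem : S'.erase X ∈ S.powerset.filter Good := by
        rw [Finset.mem_filter, Finset.mem_powerset]
        exact ⟨(Finset.erase_subset _ _).trans hsub, hG⟩
      have h1 := hmin _ hmem
      have h2 : (S'.erase X).card < S'.card := Finset.card_erase_lt_of_mem hX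
      omega
    simp only [hGood] at herase
    push_neg at herase
    obtain ⟨Y, hYq, hex, hnone⟩ := herase
    obtain ⟨X'', hX'', hd⟩ := hgood Y hYq hex
    have hXX : X'' = X := by
      by_contra hne
      exact hnone X'' (Finset.mem_erase.mpr ⟨hne, hX''⟩) hd
    refine ⟨Y, hYq, hXX ▸ hd, fun X' h1 hne hd' =>
      hnone X' (Finset.mem_erase.mpr ⟨hne, h1⟩) hd'⟩
  choose! f hf1 hf2 hf3 using hwit
  -- events
  set Ev : Finset α → Finset (α ≃ Fin n) := fun X =>
    Finset.univ.filter (fun σ => ∀ a ∈ X, ∀ b ∈ f X, σ a < σ b) with hEv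
  have hdisj : ∀ X₁ ∈ S', ∀ X₂ ∈ S', X₁ ≠ X₂ → Disjoint (Ev X₁) (Ev X₂) := by
    intro X₁ h₁ X₂ h₂ hne
    rw [Finset.disjoint_left]
    intro σ hσ1 hσ2
    rw [hEv, Finset.mem_filter] at hσ1 hσ2
    obtain ⟨a, ha1, ha2⟩ := Finset.not_disjoint_iff.mp (hf3 X₂ h₂ X₁ h₁ hne)
    obtain ⟨b, hb1, hb2⟩ := Finset.not_disjoint_iff.mp (hf3 X₁ h₁ X₂ h₂ hne.symm)
    exact absurd (hσ1.2 a ha1 b hb2) (lt_asymm (hσ2.2 b hb1 a ha2))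
  have hsum : ∑ X ∈ S', (Ev X).card ≤ Fintype.card (α ≃ Fin n) := by
    rw [← Finset.card_biUnion hdisj, ← Finset.card_univ]
    exact Finset.card_le_card (Finset.subset_univ _)
  have hN : 0 < Fintype.card (α ≃ Fin n) :=
    Fintype.card_pos_iff.mpr ⟨Fintype.equivFinOfCardEq hcard⟩
  have hmain : ∀ X ∈ S', Fintype.card (α ≃ Fin n) ≤ (Ev X).card * (p + q).choose p := by
    intro X hX
    have h1 := count_le n p (f X).card hcard X (f X) (hf2 X hX) (hS X (hsub hX)) rfl
    refine h1.trans (Nat.mul_le_mul_left _ (Nat.choose_le_choose p ?_))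
    have := hf1 X hX
    omega
  have hfinal : S'.card * Fintype.card (α ≃ Fin n) ≤
      Fintype.card (α ≃ Fin n) * (p + q).choose p := by
    calc S'.card * Fintype.card (α ≃ Fin n)
        = ∑ _X ∈ S', Fintype.card (α ≃ Fin n) := by
          rw [Finset.sum_const, smul_eq_mul]
      _ ≤ ∑ X ∈ S', (Ev X).card * (p + q).choose p := Finset.sum_le_sum hmain
      _ = (∑ X ∈ S', (Ev X).card) * (p + q).choose p := (Finset.sum_mul _ _ _).symm
      _ ≤ Fintype.card (α ≃ Fin n) * (p + q).choose p :=
          Nat.mul_le_mul_right _ hsum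
  exact Nat.le_of_mul_le_mul_right (hfinal.trans_eq (Nat.mul_comm _ _)) hN
end

section
/- With t = ⌈(1/(x^p(1−x)^q)) · (p²+q²+1) · log n⌉ independent random subsets F₁,…,F_t of an n-element universe (each element included with probability x), the probability that there exist disjoint sets A of size p and B of size q such that no Fᵢ satisfies A ⊆ Fᵢ and B ∩ Fᵢ = ∅ is at most 1/n. -/
open MeasureTheory ENNReal


lemma aux_real (n p q t : ℕ) (hn : 2 ≤ n) (x : ℝ) (hx0 : 0 < x) (hx1 : x < 1)
    (ht : t = ⌈(1 / (x ^ p * (1 - x) ^ q)) * ((p ^ 2 + q ^ 2 + 1 : ℕ) : ℝ) * Real.log n⌉₊) :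
    (n : ℝ) ^ p * (n : ℝ) ^ q * (1 - x ^ p * (1 - x) ^ q) ^ t ≤ 1 / n := by
  set s : ℝ := x ^ p * (1 - x) ^ q with hs
  have hs0 : 0 < s := mul_pos (pow_pos hx0 _) (pow_pos (by linarith) _)
  have hs1 : s ≤ 1 := mul_le_one₀ (pow_le_one₀ hx0.le hx1.le)
    (pow_nonneg (by linarith) _) (pow_le_one₀ (by linarith) (by linarith))
  have hn1 : (1:ℝ) ≤ n := by exact_mod_cast Nat.one_le_of_lt hn
  have hn0 : (0:ℝ) < n := by linarith
  set k : ℕ := p ^ 2 + q ^ 2 + 1 with hk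
  have hL : 0 ≤ Real.log n := Real.log_nonneg hn1
  have htr : (1 / s) * (k : ℝ) * Real.log n ≤ t := by rw [ht]; exact_mod_cast Nat.le_ceil _
  have hst : (k : ℝ) * Real.log n ≤ s * t := by
    have h1 := mul_le_mul_of_nonneg_left htr hs0.le
    have h2 : s * ((1 / s) * (k : ℝ) * Real.log n) = (k : ℝ) * Real.log n := by
      field_simp
    linarith
  have h1 : (1 - s) ^ t ≤ Real.exp (-(s * t)) := by
    calc (1 - s) ^ t ≤ (Real.exp (-s)) ^ t :=
          pow_le_pow_left₀ (by linarith) (by linarith [Real.add_one_le_exp (-s)]) t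
      _ = Real.exp (-(s * t)) := by
          rw [← Real.exp_nat_mul]; ring_nf
  have h3 : Real.exp (-((k : ℝ) * Real.log n)) = ((n : ℝ) ^ k)⁻¹ := by
    rw [Real.exp_neg, Real.exp_nat_mul, Real.exp_log hn0]
  have h4 : (1 - s) ^ t ≤ ((n : ℝ) ^ k)⁻¹ := by
    rw [← h3]; exact h1.trans (Real.exp_le_exp.mpr (by linarith))
  calc (n : ℝ) ^ p * (n : ℝ) ^ q * (1 - s) ^ t
      ≤ (n : ℝ) ^ p * (n : ℝ) ^ q * ((n : ℝ) ^ k)⁻¹ := by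
        apply mul_le_mul_of_nonneg_left h4 (by positivity)
    _ = (n : ℝ) ^ (p + q) / (n : ℝ) ^ k := by rw [pow_add]; ring
    _ ≤ 1 / n := by
        rw [div_le_div_iff₀ (by positivity) hn0]
        have : (n : ℝ) ^ (p + q) * n = (n : ℝ) ^ (p + q + 1) := by ring
        rw [this, one_mul]
        exact pow_le_pow_right₀ hn1 (by nlinarith [Nat.le_self_pow two_ne_zero p, Nat.le_self_pow two_ne_zero q])


lemma aux_pair {U : Type*} [Fintype U] (x : ℝ) (hx0 : 0 < x) (hx1 : x < 1) (t p q : ℕ)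
    (A B : Finset U) (hAB : Disjoint A B) (hA : A.card = p) (hB : B.card = q) :
    (Measure.pi fun _ : Fin t => Measure.pi fun _ : U =>
        (PMF.bernoulli (Real.toNNReal x) (Real.toNNReal_le_one.mpr hx1.le)).toMeasure)
      {F | ∀ i : Fin t, ¬ ((∀ a ∈ A, F i a = true) ∧ (∀ b ∈ B, F i b = false))}
      = ENNReal.ofReal ((1 - x ^ p * (1 - x) ^ q) ^ t) := by
  classical
  have hx1' : (0:ℝ) < 1 - x := by linarith
  set bm : Measure Bool :=
    (PMF.bernoulli (Real.toNNReal x) (Real.toNNReal_le_one.mpr hx1.le)).toMeasure with hbm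
  set ν : Measure (U → Bool) := Measure.pi fun _ : U => bm with hν
  have hbm_true : bm {true} = ENNReal.ofReal x := by
    rw [hbm, PMF.toMeasure_apply_singleton _ _ (measurableSet_singleton _)]
    simp only [PMF.bernoulli_apply, Bool.cond_true]; rfl
  have hbm_false : bm {false} = ENNReal.ofReal (1 - x) := by
    rw [hbm, PMF.toMeasure_apply_singleton _ _ (measurableSet_singleton _)]
    simp only [PMF.bernoulli_apply, Bool.cond_false]
    rw [ENNReal.ofReal_sub _ hx0.le, ENNReal.ofReal_one]
    rw [ENNReal.coe_sub, ENNReal.coe_one]; rfl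
  set D : U → Set Bool := fun u =>
    if u ∈ A then ({true} : Set Bool) else if u ∈ B then {false} else Set.univ with hD
  set G : Set (U → Bool) := {f | (∀ a ∈ A, f a = true) ∧ (∀ b ∈ B, f b = false)} with hG
  have hGpi : G = Set.univ.pi D := by
    ext f
    simp only [hG, Set.mem_setOf_eq, Set.mem_pi, Set.mem_univ, forall_true_left, hD]
    constructor
    · rintro ⟨h1, h2⟩ u
      by_cases huA : u ∈ A
      · simp [huA, h1 u huA]
      · by_cases huB : u ∈ B
        · simp [huA, huB, h2 u huB]
        · simp [huA, huB]
    · intro h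
      refine ⟨fun a ha => ?_, fun b hb => ?_⟩
      · have := h a; simpa [ha] using this
      · have hba : b ∉ A := fun hc => (Finset.disjoint_left.mp hAB hc) hb
        have := h b; simpa [hba, hb] using this
  have hνG : ν G = ENNReal.ofReal x ^ p * ENNReal.ofReal (1 - x) ^ q := by
    rw [hGpi, hν, Measure.pi_pi]
    have h1 : ∏ u : U, bm (D u) = ∏ u ∈ A ∪ B, bm (D u) := by
      refine (Finset.prod_subset (Finset.subset_univ _) fun u _ hu => ?_).symm
      simp only [Finset.mem_union, not_or] at hu
      have hDu : D u = Set.univ := by simp [hD, hu.1, hu.2]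
      rw [hDu]; exact measure_univ
    rw [h1, Finset.prod_union hAB]
    have h2 : ∏ u ∈ A, bm (D u) = ENNReal.ofReal x ^ p := by
      rw [Finset.prod_congr rfl fun u hu => ?_]
      · rw [Finset.prod_const, hA]
      · simp [hD, hu, hbm_true]
    have h3 : ∏ u ∈ B, bm (D u) = ENNReal.ofReal (1 - x) ^ q := by
      rw [Finset.prod_congr rfl fun u hu => ?_]
      · rw [Finset.prod_const, hB]
      · have hua : u ∉ A := fun hc => (Finset.disjoint_left.mp hAB hc) hu
        simp [hD, hua, hu, hbm_false]
    rw [h2, h3]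
  have hνGone : ν G = ENNReal.ofReal (x ^ p * (1 - x) ^ q) := by
    rw [hνG, ← ENNReal.ofReal_pow hx0.le, ← ENNReal.ofReal_pow hx1'.le,
      ← ENNReal.ofReal_mul (by positivity)]
  have hprob : IsProbabilityMeasure ν := by rw [hν]; infer_instance
  have hGc : ν Gᶜ = ENNReal.ofReal (1 - x ^ p * (1 - x) ^ q) := by
    rw [measure_compl (Set.toFinite G).measurableSet (measure_ne_top _ _), measure_univ, hνGone]
    have hle : x ^ p * (1 - x) ^ q ≤ 1 :=
      mul_le_one₀ (pow_le_one₀ hx0.le hx1.le) (by positivity) (pow_le_one₀ (by linarith) (by linarith))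
    rw [ENNReal.ofReal_sub _ (by positivity), ENNReal.ofReal_one]
  have hset : {F : Fin t → U → Bool | ∀ i : Fin t,
      ¬ ((∀ a ∈ A, F i a = true) ∧ (∀ b ∈ B, F i b = false))}
      = Set.univ.pi (fun _ : Fin t => Gᶜ) := by
    ext F
    simp only [Set.mem_setOf_eq, Set.mem_pi, Set.mem_univ, forall_true_left, Set.mem_compl_iff,
      hG, Set.mem_setOf_eq]
  rw [hset, Measure.pi_pi]
  simp only [hGc]
  rw [Finset.prod_const, Finset.card_univ, Fintype.card_fin,
    ← ENNReal.ofReal_pow (by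
      have hle : x ^ p * (1 - x) ^ q ≤ 1 :=
        mul_le_one₀ (pow_le_one₀ hx0.le hx1.le) (by positivity) (pow_le_one₀ (by linarith) (by linarith))
      linarith)]


/-- With `t = ⌈(1/(x^p (1−x)^q)) · (p²+q²+1) · log n⌉` independent random subsets
`F₁, …, F_t` of an `n`-element universe (each element included independently with
probability `x`, `0 < x < 1`, and `n ≥ 2`), the probability that there exist disjoint sets
`A` of size `p` and `B` of size `q` such that no `Fᵢ` satisfies `A ⊆ Fᵢ` and `B ∩ Fᵢ = ∅`
is at most `1/n`. -/
theorem prob_exists_bad_pair {U : Type*} [Fintype U] (n p q : ℕ) (hn : 2 ≤ n)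
    (hcard : Fintype.card U = n) (x : ℝ) (hx0 : 0 < x) (hx1 : x < 1) (t : ℕ)
    (ht : t = ⌈(1 / (x ^ p * (1 - x) ^ q)) * ((p ^ 2 + q ^ 2 + 1 : ℕ) : ℝ) * Real.log n⌉₊) :
    (Measure.pi fun _ : Fin t => Measure.pi fun _ : U =>
        (PMF.bernoulli (Real.toNNReal x) (Real.toNNReal_le_one.mpr hx1.le)).toMeasure)
      {F | ∃ A B : Finset U, Disjoint A B ∧ A.card = p ∧ B.card = q ∧
        ∀ i : Fin t, ¬ ((∀ a ∈ A, F i a = true) ∧ (∀ b ∈ B, F i b = false))}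
      ≤ 1 / (n : ℝ≥0∞) := by
  classical
  set μ : Measure (Fin t → U → Bool) := Measure.pi fun _ : Fin t => Measure.pi fun _ : U =>
      (PMF.bernoulli (Real.toNNReal x) (Real.toNNReal_le_one.mpr hx1.le)).toMeasure with hμ
  set c : ℝ≥0∞ := ENNReal.ofReal ((1 - x ^ p * (1 - x) ^ q) ^ t) with hc
  set T : Finset U → Finset U → Set (Fin t → U → Bool) := fun A B =>
    {F | Disjoint A B ∧ A.card = p ∧ B.card = q ∧
      ∀ i : Fin t, ¬ ((∀ a ∈ A, F i a = true) ∧ (∀ b ∈ B, F i b = false))} with hT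
  have hE : {F : Fin t → U → Bool | ∃ A B : Finset U, Disjoint A B ∧ A.card = p ∧ B.card = q ∧
      ∀ i : Fin t, ¬ ((∀ a ∈ A, F i a = true) ∧ (∀ b ∈ B, F i b = false))}
      = ⋃ A : Finset U, ⋃ B : Finset U, T A B := by
    ext F; simp [hT, Set.mem_iUnion]
  have hTle : ∀ A B : Finset U, μ (T A B) ≤ if A.card = p ∧ B.card = q then c else 0 := by
    intro A B
    by_cases hcards : A.card = p ∧ B.card = q
    · rw [if_pos hcards]
      by_cases hd : Disjoint A B
      · have : T A B = {F : Fin t → U → Bool |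
            ∀ i : Fin t, ¬ ((∀ a ∈ A, F i a = true) ∧ (∀ b ∈ B, F i b = false))} := by
          ext F; simp [hT, hd, hcards.1, hcards.2]
        rw [this, hμ, aux_pair x hx0 hx1 t p q A B hd hcards.1 hcards.2]
      · have : T A B = ∅ := by ext F; simp [hT, hd]
        simp [this]
    · rw [if_neg hcards]
      have : T A B = ∅ := by
        ext F
        simp only [hT, Set.mem_setOf_eq, Set.mem_empty_iff_false, iff_false]
        rintro ⟨-, h1, h2, -⟩
        exact hcards ⟨h1, h2⟩
      simp [this]
  have hsum : μ {F : Fin t → U → Bool | ∃ A B : Finset U, Disjoint A B ∧ A.card = p ∧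
      B.card = q ∧ ∀ i : Fin t, ¬ ((∀ a ∈ A, F i a = true) ∧ (∀ b ∈ B, F i b = false))}
      ≤ ∑ A : Finset U, ∑ B : Finset U, (if A.card = p ∧ B.card = q then c else 0) := by
    rw [hE]
    calc μ (⋃ A : Finset U, ⋃ B : Finset U, T A B)
        ≤ ∑' A : Finset U, μ (⋃ B : Finset U, T A B) := measure_iUnion_le _
      _ ≤ ∑' A : Finset U, ∑' B : Finset U, μ (T A B) :=
          ENNReal.tsum_le_tsum fun A => measure_iUnion_le _
      _ = ∑ A : Finset U, ∑ B : Finset U, μ (T A B) := by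
          rw [tsum_fintype]; exact Finset.sum_congr rfl fun A _ => tsum_fintype _
      _ ≤ _ := Finset.sum_le_sum fun A _ => Finset.sum_le_sum fun B _ => hTle A B
  have hcount : ∀ r : ℕ, ((Finset.univ.filter fun A : Finset U => A.card = r).card : ℝ≥0∞)
      ≤ (n : ℝ≥0∞) ^ r := by
    intro r
    have h1 : Finset.univ.filter (fun A : Finset U => A.card = r)
        = Finset.powersetCard r Finset.univ := by
      ext A; simp [Finset.mem_powersetCard_univ]
    have h2 : (Finset.univ.filter fun A : Finset U => A.card = r).card = n.choose r := by
      rw [h1, Finset.card_powersetCard, Finset.card_univ, hcard]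
    rw [h2]
    exact_mod_cast Nat.choose_le_pow n r
  have hsum2 : (∑ A : Finset U, ∑ B : Finset U, (if A.card = p ∧ B.card = q then c else 0))
      ≤ (n : ℝ≥0∞) ^ p * ((n : ℝ≥0∞) ^ q * c) := by
    have hinner : ∀ A : Finset U, (∑ B : Finset U, (if A.card = p ∧ B.card = q then c else 0))
        = if A.card = p then ((Finset.univ.filter fun B : Finset U => B.card = q).card : ℝ≥0∞) * c
          else 0 := by
      intro A
      by_cases hA : A.card = p
      · simp only [hA, true_and, if_pos]
        rw [← Finset.sum_filter, Finset.sum_const, nsmul_eq_mul]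
      · simp [hA]
    calc (∑ A : Finset U, ∑ B : Finset U, (if A.card = p ∧ B.card = q then c else 0))
        = ∑ A : Finset U, (if A.card = p
            then ((Finset.univ.filter fun B : Finset U => B.card = q).card : ℝ≥0∞) * c else 0) :=
          Finset.sum_congr rfl fun A _ => hinner A
      _ = ((Finset.univ.filter fun A : Finset U => A.card = p).card : ℝ≥0∞) *
            (((Finset.univ.filter fun B : Finset U => B.card = q).card : ℝ≥0∞) * c) := by
          rw [← Finset.sum_filter, Finset.sum_const, nsmul_eq_mul]
      _ ≤ (n : ℝ≥0∞) ^ p * ((n : ℝ≥0∞) ^ q * c) :=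
          mul_le_mul' (hcount p) (mul_le_mul' (hcount q) le_rfl)
  refine hsum.trans (hsum2.trans ?_)
  have hreal := aux_real n p q t hn x hx0 hx1 ht
  have hofreal : (n : ℝ≥0∞) ^ p * ((n : ℝ≥0∞) ^ q * c)
      = ENNReal.ofReal ((n : ℝ) ^ p * (n : ℝ) ^ q * (1 - x ^ p * (1 - x) ^ q) ^ t) := by
    rw [hc, ← ENNReal.ofReal_natCast n, ← ENNReal.ofReal_pow (by positivity),
      ← ENNReal.ofReal_pow (by positivity),
      ← ENNReal.ofReal_mul (by positivity), ← ENNReal.ofReal_mul (by positivity)]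
    ring_nf
  rw [hofreal]
  have hfin : ENNReal.ofReal (1 / (n : ℝ)) = 1 / (n : ℝ≥0∞) := by
    rw [one_div, one_div, ← ENNReal.ofReal_natCast n,
      ENNReal.ofReal_inv_of_pos (by positivity)]
  rw [← hfin]
  exact ENNReal.ofReal_le_ofReal hreal
end

section
/- For every n and k there exists a k-perfect family of hash functions from a universe of size n to a universe of size k² of size O(k^{O(1)} · log n); in particular, for every n ≥ k there exists a family of functions f₁,…,f_t : [n] → [k²] with t ≤ poly(k) · log n such that for every S ⊆ [n] with |S| = k some fᵢ is injective on S. -/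
lemma aux_pow (a j : ℕ) : a ^ (j+1) + (j+1) * a ^ j ≤ (a+1) ^ (j+1) := by
  induction j with
  | zero => simp [pow_succ]
  | succ j ih =>
    have h2 : (a ^ (j+1) + (j+1) * a ^ j) * (a+1) ≤ (a+1) ^ (j+1) * (a+1) :=
      Nat.mul_le_mul_right _ ih
    calc a ^ (j+2) + (j+2) * a ^ (j+1)
        ≤ (a ^ (j+1) + (j+1) * a ^ j) * (a+1) := by ring_nf; nlinarith [pow_nonneg (Nat.zero_le a) j]
      _ ≤ (a+1) ^ (j+1) * (a+1) := h2
      _ = (a+1) ^ (j+2) := by ring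

lemma two_mul_pow_le (m : ℕ) (hm : 1 ≤ m) : 2 * m ^ m ≤ (m+1) ^ m := by
  obtain ⟨j, rfl⟩ := Nat.exists_eq_add_of_le hm
  have h := aux_pow (1 + j) j
  have e : (1+j) * (1+j) ^ j = (1+j) ^ (j+1) := by ring
  calc 2 * (1+j) ^ (1+j) = (1+j) ^ (j+1) + (j+1) * (1+j) ^ j := by ring
    _ ≤ (1+j+1) ^ (j+1) := h
    _ = (1+j+1) ^ (1+j) := by ring

open Finset in
lemma pair_count (n m : ℕ) (x y : Fin n) (hxy : x ≠ y) :
    (Finset.univ.filter (fun g : Fin n → Fin m => g x = g y)).card ≤ m ^ (n-1) := by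
  classical
  have hcard : Fintype.card ({z : Fin n // z ≠ y} → Fin m) = m ^ (n-1) := by
    rw [Fintype.card_fun, Fintype.card_fin]
    congr 1
    rw [Fintype.card_subtype_compl, Fintype.card_subtype_eq, Fintype.card_fin]
  calc (Finset.univ.filter (fun g : Fin n → Fin m => g x = g y)).card
      ≤ (Finset.univ : Finset ({z : Fin n // z ≠ y} → Fin m)).card := by
        apply Finset.card_le_card_of_injOn (fun g => fun z => g z.1)
        · intro g _; exact Finset.mem_univ _
        · intro g hg g' hg' hgg'
          simp only [Finset.mem_coe, Finset.mem_filter] at hg hg'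
          funext z
          by_cases hz : z = y
          · subst hz
            have h1 : g x = g' x := congrFun hgg' ⟨x, hxy⟩
            rw [← hg.2, ← hg'.2]; exact h1
          · exact congrFun hgg' ⟨z, hz⟩
    _ = m ^ (n-1) := by rw [Finset.card_univ, hcard]

open Finset in
lemma bad_count {n k : ℕ} (hn : 1 ≤ n) (S : Finset (Fin n)) (hS : S.card = k) :
    k * (Finset.univ.filter (fun g : Fin n → Fin (k^2) => ¬ Set.InjOn g ↑S)).card
      ≤ (k-1) * (k^2) ^ n := by
  classical
  have hsub : Finset.univ.filter (fun g : Fin n → Fin (k^2) => ¬ Set.InjOn g ↑S)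
      ⊆ S.offDiag.biUnion (fun p =>
          Finset.univ.filter (fun g : Fin n → Fin (k^2) => g p.1 = g p.2)) := by
    intro g hg
    simp only [Finset.mem_filter, Finset.mem_univ, true_and] at hg
    rw [Set.InjOn] at hg
    push_neg at hg
    obtain ⟨x, hx, y, hy, hgxy, hne⟩ := hg
    refine Finset.mem_biUnion.2 ⟨(x, y), Finset.mem_offDiag.2 ⟨hx, hy, hne⟩, ?_⟩
    simp [hgxy]
  have h1 : (Finset.univ.filter (fun g : Fin n → Fin (k^2) => ¬ Set.InjOn g ↑S)).card
      ≤ (k * k - k) * (k^2) ^ (n-1) := by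
    calc _ ≤ (S.offDiag.biUnion (fun p =>
          Finset.univ.filter (fun g : Fin n → Fin (k^2) => g p.1 = g p.2))).card :=
            Finset.card_le_card hsub
      _ ≤ ∑ p ∈ S.offDiag,
            (Finset.univ.filter (fun g : Fin n → Fin (k^2) => g p.1 = g p.2)).card :=
            Finset.card_biUnion_le
      _ ≤ ∑ p ∈ S.offDiag, (k^2) ^ (n-1) := by
            apply Finset.sum_le_sum
            intro p hp
            exact pair_count n (k^2) p.1 p.2 (Finset.mem_offDiag.1 hp).2.2
      _ = (k * k - k) * (k^2) ^ (n-1) := by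
            rw [Finset.sum_const, smul_eq_mul, Finset.offDiag_card, hS]
  calc k * (Finset.univ.filter (fun g : Fin n → Fin (k^2) => ¬ Set.InjOn g ↑S)).card
      ≤ k * ((k * k - k) * (k^2) ^ (n-1)) := Nat.mul_le_mul_left _ h1
    _ = (k-1) * (k^2 * (k^2) ^ (n-1)) := by
        have hk : k * (k * k - k) = (k-1) * k^2 := by
          cases k with
          | zero => simp
          | succ m => rw [Nat.mul_succ, Nat.add_sub_cancel, Nat.succ_sub_one]; ring
        rw [← mul_assoc, ← mul_assoc, hk]
    _ = (k-1) * (k^2) ^ n := by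
        congr 1
        rw [← pow_succ']
        congr 1
        omega

/-- For every `n ≥ k ≥ 1` there exists a `k`-perfect family of hash functions from a universe
of size `n` to a universe of size `k²` of size `O(k^{O(1)} · log n)`: there is a constant `c`
such that for all such `n, k` there are functions `f₁, …, f_t : [n] → [k²]` with
`t ≤ c · k^c · (log n + 1)` such that for every `S ⊆ [n]` with `|S| = k` some `fᵢ` is
injective on `S`. -/
theorem exists_kPerfect_hash_family :
    ∃ c : ℕ, 0 < c ∧ ∀ n k : ℕ, 0 < k → k ≤ n →
      ∃ (t : ℕ) (f : Fin t → Fin n → Fin (k ^ 2)),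
        t ≤ c * k ^ c * (Nat.log 2 n + 1) ∧
        ∀ S : Finset (Fin n), S.card = k → ∃ i : Fin t, Set.InjOn (f i) ↑S := by
  classical
  refine ⟨2, by norm_num, fun n k hk hkn => ?_⟩
  rcases eq_or_lt_of_le (show 1 ≤ k from hk) with hk1 | hk2
  · -- k = 1
    refine ⟨1, fun _ _ => ⟨0, by nlinarith [sq_nonneg k]⟩, ?_, ?_⟩
    · nlinarith [Nat.log 2 n]
    · intro S hS
      refine ⟨0, ?_⟩
      rw [← hk1] at hS
      obtain ⟨a, rfl⟩ := Finset.card_eq_one.1 hS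
      simp [Set.InjOn]
  · -- k ≥ 2
    have hn : 1 ≤ n := le_trans (show 1 ≤ k from hk) hkn
    set L := Nat.log 2 n with hL
    set s := k * (L + 1) + 1 with hs
    set t := (k - 1) * s with ht
    -- size bound
    have htb : t ≤ 2 * k ^ 2 * (L + 1) := by
      have h1 : s ≤ 2 * k * (L + 1) := by nlinarith [Nat.one_le_iff_ne_zero.2 (by omega : k ≠ 0), Nat.zero_le L]
      calc t ≤ k * s := Nat.mul_le_mul_right _ (Nat.sub_le _ _)
        _ ≤ k * (2 * k * (L + 1)) := Nat.mul_le_mul_left _ h1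
        _ = 2 * k ^ 2 * (L + 1) := by ring
    set M := (k ^ 2) ^ n with hM
    set badG : Finset (Fin n) → Finset (Fin n → Fin (k^2)) :=
      fun S => Finset.univ.filter (fun g => ¬ Set.InjOn g ↑S) with hbadG
    set Bad : Finset (Fin t → Fin n → Fin (k^2)) :=
      Finset.univ.filter (fun F => ∃ S : Finset (Fin n), S.card = k ∧
        ∀ i, ¬ Set.InjOn (F i) ↑S) with hBad
    have hsub : Bad ⊆ (Finset.univ.powersetCard k).biUnion
        (fun S => Fintype.piFinset (fun _ : Fin t => badG S)) := by
      intro F hF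
      simp only [hBad, Finset.mem_filter, Finset.mem_univ, true_and] at hF
      obtain ⟨S, hSc, hSi⟩ := hF
      refine Finset.mem_biUnion.2 ⟨S, Finset.mem_powersetCard_univ.2 hSc, ?_⟩
      rw [Fintype.mem_piFinset]
      intro i
      simp [hbadG, hSi i]
    -- counting
    have hcount : k ^ t * Bad.card ≤ Nat.choose n k * ((k-1) ^ t * M ^ t) := by
      calc k ^ t * Bad.card
          ≤ k ^ t * ∑ S ∈ Finset.univ.powersetCard k,
              (Fintype.piFinset (fun _ : Fin t => badG S)).card := by
            exact Nat.mul_le_mul_left _ (le_trans (Finset.card_le_card hsub) Finset.card_biUnion_le)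
        _ = ∑ S ∈ Finset.univ.powersetCard k, k ^ t * (badG S).card ^ t := by
            rw [Finset.mul_sum]
            congr 1; funext S
            rw [Fintype.card_piFinset]
            simp
        _ ≤ ∑ S ∈ Finset.univ.powersetCard k, (k-1) ^ t * M ^ t := by
            apply Finset.sum_le_sum
            intro S hS
            have hSc : S.card = k := Finset.mem_powersetCard_univ.1 hS
            have hb : k * (badG S).card ≤ (k-1) * M := bad_count hn S hSc
            calc k ^ t * (badG S).card ^ t = (k * (badG S).card) ^ t := by rw [mul_pow]
              _ ≤ ((k-1) * M) ^ t := Nat.pow_le_pow_left hb t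
              _ = (k-1) ^ t * M ^ t := mul_pow _ _ _
        _ = Nat.choose n k * ((k-1) ^ t * M ^ t) := by
            rw [Finset.sum_const, smul_eq_mul, Finset.card_powersetCard, Finset.card_univ,
              Fintype.card_fin]
    -- choose n k < 2 ^ s
    have hchoose : Nat.choose n k < 2 ^ s := by
      calc Nat.choose n k ≤ n ^ k := Nat.choose_le_pow n k
        _ ≤ (2 ^ (L + 1)) ^ k := Nat.pow_le_pow_left (le_of_lt (Nat.lt_pow_succ_log_self (by norm_num) n)) k
        _ = 2 ^ (k * (L + 1)) := by rw [← pow_mul, mul_comm]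
        _ < 2 ^ s := Nat.pow_lt_pow_right (by norm_num) (by omega)
    -- 2^s * (k-1)^t ≤ k^t
    have hkey : 2 ^ s * (k-1) ^ t ≤ k ^ t := by
      have h2 := two_mul_pow_le (k-1) (by omega)
      have hke : k - 1 + 1 = k := by omega
      rw [hke] at h2
      calc 2 ^ s * (k-1) ^ t = (2 * (k-1) ^ (k-1)) ^ s := by
            rw [mul_pow, ← pow_mul]
          _ ≤ (k ^ (k-1)) ^ s := Nat.pow_le_pow_left h2 s
          _ = k ^ t := by rw [← pow_mul]
    have hM1 : 0 < M ^ t := by positivity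
    have hk1t : 0 < (k-1) ^ t := Nat.pow_pos (by omega)
    have hlt : Bad.card < M ^ t := by
      have : k ^ t * Bad.card < k ^ t * M ^ t := by
        calc k ^ t * Bad.card ≤ Nat.choose n k * ((k-1) ^ t * M ^ t) := hcount
          _ < 2 ^ s * ((k-1) ^ t * M ^ t) :=
              mul_lt_mul_of_pos_right hchoose (by positivity)
          _ = (2 ^ s * (k-1) ^ t) * M ^ t := by ring
          _ ≤ k ^ t * M ^ t := Nat.mul_le_mul_right _ hkey
      exact Nat.lt_of_mul_lt_mul_left this
    have hcardΩ : Fintype.card (Fin t → Fin n → Fin (k^2)) = M ^ t := by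
      rw [Fintype.card_fun, Fintype.card_fin, Fintype.card_fun, Fintype.card_fin, Fintype.card_fin]
    obtain ⟨F, hF⟩ : ∃ F : Fin t → Fin n → Fin (k^2), F ∉ Bad := by
      by_contra h
      push_neg at h
      have : Bad = Finset.univ := Finset.eq_univ_iff_forall.2 h
      rw [this, Finset.card_univ, hcardΩ] at hlt
      exact lt_irrefl _ hlt
    refine ⟨t, F, by simpa using htb, ?_⟩
    intro S hS
    simp only [hBad, Finset.mem_filter, Finset.mem_univ, true_and] at hF
    push_neg at hF
    obtain ⟨i, hi⟩ := hF S hS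
    exact ⟨i, hi⟩
end

section
/- Let f₁,…,f_t be a (p+q)-perfect family of hash functions from U to [(p+q)²], and let (F̂, χ̂, χ̂') be a (p+q)²-p-q-separating collection over [(p+q)²]. Define F = ⋃_i f_i^{-1}(F̂), and for A of size at most p set χ(A) = ⋃_{i : f_i injective on A} f_i^{-1}(χ̂(f_i(A))), and similarly χ'(B) for B of size at most q using χ̂'. Then (F, χ, χ') is a generalized n-p-q-separating collection over U. -/
open Finset

/-- The preimage of a finite set `G` under `g`, as a finset of the finite universe `U`. -/
def preimg {U : Type*} [Fintype U] {m : ℕ} (g : U → Fin m) (G : Finset (Fin m)) : Finset U :=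
  Finset.univ.filter (fun u => g u ∈ G)

/-- `(F, χ, χ')` is a generalized `p`-`q`-separating collection over the universe `V`:
(1) every `F' ∈ χ(A)` contains `A` (for `|A| ≤ p`), (2) every `F' ∈ χ'(B)` is disjoint from
`B` (for `|B| ≤ q`), and (3) for all pairwise disjoint `A₁, …, A_r` and `B` with
`Σ|Aᵢ| = p` and `|B| = q` there is an `F'` lying in every `χ(Aᵢ)` and in `χ'(B)`. -/
def IsGenSepColl {V : Type*} (p q : ℕ)
    (F : Finset (Finset V)) (χ χ' : Finset V → Finset (Finset V)) : Prop :=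
  (∀ A : Finset V, A.card ≤ p → χ A ⊆ F ∧ ∀ F' ∈ χ A, A ⊆ F') ∧
  (∀ B : Finset V, B.card ≤ q → χ' B ⊆ F ∧ ∀ F' ∈ χ' B, Disjoint F' B) ∧
  (∀ (r : ℕ) (A : Fin r → Finset V) (B : Finset V),
      (∀ i j : Fin r, i ≠ j → Disjoint (A i) (A j)) → (∀ i : Fin r, Disjoint (A i) B) →
      (∑ i, (A i).card) = p → B.card = q →
      ∃ F', (∀ i : Fin r, F' ∈ χ (A i)) ∧ F' ∈ χ' B)

/-- Pulling back a `(p+q)²`-`p`-`q`-separating collection along a `(p+q)`-perfect family of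
hash functions yields a generalized `n`-`p`-`q`-separating collection over `U`. -/
theorem genSepColl_of_hash {U : Type*} [Fintype U] [DecidableEq U] (p q t : ℕ)
    (f : Fin t → U → Fin ((p + q) ^ 2))
    (hperfect : ∀ S : Finset U, S.card = p + q → ∃ i : Fin t, Set.InjOn (f i) ↑S)
    (Fhat : Finset (Finset (Fin ((p + q) ^ 2))))
    (χhat χ'hat : Finset (Fin ((p + q) ^ 2)) → Finset (Finset (Fin ((p + q) ^ 2))))
    (hbase : IsGenSepColl p q Fhat χhat χ'hat)
    (F : Finset (Finset U)) (χ χ' : Finset U → Finset (Finset U))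
    (hF : F = Finset.univ.biUnion (fun i : Fin t => Fhat.image (preimg (f i))))
    (hχ : ∀ A : Finset U, χ A =
        (Finset.univ.filter (fun i : Fin t => (A.image (f i)).card = A.card)).biUnion
          (fun i => (χhat (A.image (f i))).image (preimg (f i))))
    (hχ' : ∀ B : Finset U, χ' B =
        (Finset.univ.filter (fun i : Fin t => (B.image (f i)).card = B.card)).biUnion
          (fun i => (χ'hat (B.image (f i))).image (preimg (f i)))) :
    IsGenSepColl p q F χ χ' := by
  obtain ⟨h1, h2, h3⟩ := hbase
  refine ⟨?_, ?_, ?_⟩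
  · intro A hA
    rw [hχ A]
    constructor
    · intro F' hF'
      simp only [Finset.mem_biUnion, Finset.mem_filter, Finset.mem_univ, true_and,
        Finset.mem_image] at hF'
      obtain ⟨i, hi, G, hG, rfl⟩ := hF'
      rw [hF]
      simp only [Finset.mem_biUnion, Finset.mem_univ, true_and, Finset.mem_image]
      exact ⟨i, G, (h1 _ (by rw [hi]; exact hA)).1 hG, rfl⟩
    · intro F' hF'
      simp only [Finset.mem_biUnion, Finset.mem_filter, Finset.mem_univ, true_and,
        Finset.mem_image] at hF'
      obtain ⟨i, hi, G, hG, rfl⟩ := hF'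
      intro u hu
      simp only [preimg, Finset.mem_filter, Finset.mem_univ, true_and]
      exact (h1 _ (by rw [hi]; exact hA)).2 G hG (Finset.mem_image_of_mem _ hu)
  · intro B hB
    rw [hχ' B]
    constructor
    · intro F' hF'
      simp only [Finset.mem_biUnion, Finset.mem_filter, Finset.mem_univ, true_and,
        Finset.mem_image] at hF'
      obtain ⟨i, hi, G, hG, rfl⟩ := hF'
      rw [hF]
      simp only [Finset.mem_biUnion, Finset.mem_univ, true_and, Finset.mem_image]
      exact ⟨i, G, (h2 _ (by rw [hi]; exact hB)).1 hG, rfl⟩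
    · intro F' hF'
      simp only [Finset.mem_biUnion, Finset.mem_filter, Finset.mem_univ, true_and,
        Finset.mem_image] at hF'
      obtain ⟨i, hi, G, hG, rfl⟩ := hF'
      rw [Finset.disjoint_left]
      intro u hu hub
      have hd := (h2 _ (by rw [hi]; exact hB)).2 G hG
      simp only [preimg, Finset.mem_filter, Finset.mem_univ, true_and] at hu
      exact (Finset.disjoint_left.mp hd hu) (Finset.mem_image_of_mem _ hub)
  · intro r A B hAA hAB hsum hB
    set S : Finset U := (Finset.univ.biUnion A) ∪ B with hS
    have hSA : ∀ i, A i ⊆ S := fun i => Finset.Subset.trans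
      (Finset.subset_biUnion_of_mem A (Finset.mem_univ i)) Finset.subset_union_left
    have hSB : B ⊆ S := Finset.subset_union_right
    have hdisj : Disjoint (Finset.univ.biUnion A) B := by
      rw [Finset.disjoint_biUnion_left]
      exact fun i _ => hAB i
    have hcard : S.card = p + q := by
      rw [hS, Finset.card_union_of_disjoint hdisj,
        Finset.card_biUnion (fun i _ j _ h => hAA i j h), hsum, hB]
    obtain ⟨i, hinj⟩ := hperfect S hcard
    have hinj' : ∀ T : Finset U, T ⊆ S → (T.image (f i)).card = T.card := fun T hT =>
      Finset.card_image_of_injOn (hinj.mono (Finset.coe_subset.mpr hT))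
    have hdisjim : ∀ T T' : Finset U, T ⊆ S → T' ⊆ S → Disjoint T T' →
        Disjoint (T.image (f i)) (T'.image (f i)) := by
      intro T T' hT hT' hTT'
      rw [Finset.disjoint_left]
      rintro v hv hv'
      obtain ⟨a, ha, rfl⟩ := Finset.mem_image.mp hv
      obtain ⟨a', ha', he⟩ := Finset.mem_image.mp hv'
      have : a' = a := hinj (hT' ha') (hT ha) he
      exact (Finset.disjoint_left.mp hTT' ha) (this ▸ ha')
    obtain ⟨G, hGA, hGB⟩ := h3 r (fun j => (A j).image (f i)) (B.image (f i))
      (fun j k h => hdisjim _ _ (hSA j) (hSA k) (hAA j k h))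
      (fun j => hdisjim _ _ (hSA j) hSB (hAB j))
      ((Finset.sum_congr rfl fun j _ => hinj' _ (hSA j)).trans hsum)
      (by rw [hinj' B hSB, hB])
    refine ⟨preimg (f i) G, fun j => ?_, ?_⟩
    · rw [hχ (A j)]
      simp only [Finset.mem_biUnion, Finset.mem_filter, Finset.mem_univ, true_and,
        Finset.mem_image]
      exact ⟨i, hinj' _ (hSA j), G, hGA j, rfl⟩
    · rw [hχ' B]
      simp only [Finset.mem_biUnion, Finset.mem_filter, Finset.mem_univ, true_and,
        Finset.mem_image]
      exact ⟨i, hinj' B hSB, G, hGB, rfl⟩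
end

section
/- Let M be a linear matroid of rank k represented as above with independent set S of size p₂, and let L be a p₁-family of independent sets of M, each disjoint from S and with X ∪ S independent. If L̂(S) is a (k−p₁−p₂)-representative family (in the contracted matroid M/S) for L(S) = {X : X ∪ S ∈ L • {S}}, then {X ∪ S : X ∈ L̂(S)} is a (k−p₁−p₂)-representative family for L • {S} in M. -/
/-- The lower part of a column vector: the restriction of `v e : Fin k → 𝔽` to the last
`k − p₂` coordinates. -/
def lowPart {𝔽 E : Type*} {k : ℕ} (p₂ : ℕ) (hp : p₂ ≤ k) (v : E → Fin k → 𝔽) :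
    E → Fin (k - p₂) → 𝔽 :=
  fun e r => v e (Fin.cast (Nat.add_sub_cancel' hp) (Fin.natAdd p₂ r))

/-- `q`-representative subfamily with respect to an abstract independence predicate `Indep`
on finite subsets of the ground set. -/
def RepFam {E : Type*} [DecidableEq E] (Indep : Finset E → Prop) (q : ℕ)
    (Shat Sfam : Set (Finset E)) : Prop :=
  Shat ⊆ Sfam ∧ ∀ Y : Finset E, Y.card ≤ q →
    (∃ X ∈ Sfam, Disjoint X Y ∧ Indep (X ∪ Y)) →
    ∃ X' ∈ Shat, Disjoint X' Y ∧ Indep (X' ∪ Y)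

lemma finset_indep_iff {𝔽 E W : Type*} [Field 𝔽] [AddCommGroup W] [Module 𝔽 W]
    (Z : Finset E) [DecidableEq E] (f : E → W) :
    LinearIndependent 𝔽 (fun z : {x // x ∈ Z} => f z.1) ↔
      ∀ c : E → 𝔽, ∑ z ∈ Z, c z • f z = 0 → ∀ z ∈ Z, c z = 0 := by
  rw [Fintype.linearIndependent_iff]
  constructor
  · intro h c hc z hz
    refine h (fun z => c z.1) ?_ ⟨z, hz⟩
    rw [Finset.univ_eq_attach, Finset.sum_attach Z (fun z => c z • f z), hc]
  · intro h g hg i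
    classical
    set c : E → 𝔽 := fun x => if hx : x ∈ Z then g ⟨x, hx⟩ else 0 with hcdef
    have hsum : ∑ z ∈ Z, c z • f z = 0 := by
      rw [← Finset.sum_attach Z (fun z => c z • f z), ← hg, Finset.univ_eq_attach]
      refine Finset.sum_congr rfl fun x _ => ?_
      simp [hcdef, x.2]
    have := h c hsum i.1 i.2
    simpa [hcdef, i.2] using this

lemma key_equiv {𝔽 E : Type*} [Field 𝔽] [DecidableEq E]
    {k : ℕ} (p₂ : ℕ) (hp : p₂ ≤ k) (v : E → Fin k → 𝔽)
    (S : Finset E) (hScard : S.card = p₂)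
    (σ : {x // x ∈ S} → Fin p₂) (hσ : Function.Injective σ)
    (hSform : ∀ (s : E) (hs : s ∈ S),
      v s = fun r : Fin k => if (r : ℕ) = (σ ⟨s, hs⟩ : ℕ) then 1 else 0)
    (Z : Finset E) (hZS : Disjoint Z S) :
    LinearIndependent 𝔽 (fun z : {x // x ∈ Z ∪ S} => v z.1) ↔
      LinearIndependent 𝔽 (fun z : {x // x ∈ Z} => lowPart p₂ hp v z.1) := by
  classical
  have hσbij : Function.Bijective σ := by
    refine (Fintype.bijective_iff_injective_and_card σ).2 ⟨hσ, ?_⟩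
    simp [Fintype.card_coe, hScard]
  -- value of v on S at a coordinate
  have hvS : ∀ (s : E) (hs : s ∈ S) (r : Fin k),
      v s r = if (r : ℕ) = (σ ⟨s, hs⟩ : ℕ) then 1 else 0 := by
    intro s hs r; rw [hSform s hs]
  -- sum over S at a high coordinate is 0
  have highS : ∀ (d : E → 𝔽) (r : Fin k), p₂ ≤ (r : ℕ) →
      (∑ s ∈ S, d s • v s) r = 0 := by
    intro d r hr
    rw [Finset.sum_apply]
    rw [← Finset.sum_attach S (fun s => (d s • v s) r)]
    refine Finset.sum_eq_zero fun s _ => ?_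
    have : v s.1 r = 0 := by
      rw [hvS s.1 s.2 r]
      have : (σ ⟨s.1, s.2⟩ : ℕ) < p₂ := (σ ⟨s.1, s.2⟩).2
      exact if_neg (by omega)
    simp [this]
  -- sum over S at a low coordinate picks out one term
  set τ : {x // x ∈ S} ≃ Fin p₂ := Equiv.ofBijective σ hσbij with hτ
  have hτσ : ∀ s, τ s = σ s := fun s => rfl
  have lowS : ∀ (d : E → 𝔽) (r₀ : Fin p₂),
      (∑ s ∈ S, d s • v s) (Fin.castLE hp r₀) =
        d (τ.symm r₀ : {x // x ∈ S}).1 := by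
    intro d r₀
    rw [Finset.sum_apply, ← Finset.sum_attach S (fun s => (d s • v s) (Fin.castLE hp r₀))]
    have hpt : ∀ s : {x // x ∈ S},
        (d s.1 • v s.1) (Fin.castLE hp r₀) = if s = τ.symm r₀ then d s.1 else 0 := by
      intro s
      rw [Pi.smul_apply, smul_eq_mul, hvS s.1 s.2]
      have hcond : (((Fin.castLE hp r₀ : Fin k)) : ℕ) = ((σ s : Fin p₂) : ℕ) ↔
          s = τ.symm r₀ := by
        rw [Equiv.eq_symm_apply, hτσ]
        constructor
        · intro hc; exact Fin.ext (by simpa using hc.symm)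
        · intro hc; rw [hc]; simp
      simp only [Subtype.coe_eta]
      rw [mul_ite, mul_one, mul_zero]
      by_cases h : s = τ.symm r₀
      · rw [if_pos h, if_pos (hcond.2 h)]
      · rw [if_neg h, if_neg (fun hc => h (hcond.1 hc))]
    rw [Finset.sum_congr rfl (fun s _ => hpt s),
      Finset.sum_ite_eq' _ (τ.symm r₀) (fun s => d s.1)]
    simp
  rw [finset_indep_iff, finset_indep_iff]
  constructor
  · -- v-indep on Z ∪ S → lowPart-indep on Z
    intro h c hc
    set w : Fin k → 𝔽 := ∑ z ∈ Z, c z • v z with hw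
    have hwhigh : ∀ r : Fin k, p₂ ≤ (r : ℕ) → w r = 0 := by
      intro r hr
      have hr' : (r : ℕ) - p₂ < k - p₂ := by omega
      set r' : Fin (k - p₂) := ⟨(r : ℕ) - p₂, hr'⟩ with hr'def
      have hre : (Fin.cast (Nat.add_sub_cancel' hp) (Fin.natAdd p₂ r')) = r := by
        apply Fin.ext; simp [hr'def]; omega
      have := congrFun hc r'
      rw [Finset.sum_apply, Pi.zero_apply] at this
      rw [hw, Finset.sum_apply, ← this]
      refine Finset.sum_congr rfl fun z _ => ?_
      simp only [Pi.smul_apply, smul_eq_mul, lowPart]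
      rw [hre]
    set d : E → 𝔽 := fun x => if hx : x ∈ S then -(w (Fin.castLE hp (σ ⟨x, hx⟩))) else 0
      with hd
    set e : E → 𝔽 := fun x => if x ∈ Z then c x else d x with he
    have hsum : ∑ x ∈ Z ∪ S, e x • v x = 0 := by
      rw [Finset.sum_union hZS]
      have h1 : ∑ x ∈ Z, e x • v x = w := by
        rw [hw]; exact Finset.sum_congr rfl fun x hx => by simp [he, hx]
      have h2 : ∑ x ∈ S, e x • v x = ∑ x ∈ S, d x • v x := by
        refine Finset.sum_congr rfl fun x hx => ?_
        have : x ∉ Z := fun hc' => (Finset.disjoint_left.1 hZS) hc' hx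
        simp [he, this]
      rw [h1, h2]
      funext r
      rw [Pi.add_apply, Pi.zero_apply]
      by_cases hr : p₂ ≤ (r : ℕ)
      · rw [hwhigh r hr, highS d r hr, add_zero]
      · push_neg at hr
        set r₀ : Fin p₂ := ⟨(r : ℕ), hr⟩ with hr₀
        have hcast : Fin.castLE hp r₀ = r := by apply Fin.ext; simp [hr₀]
        rw [← hcast, lowS d r₀]
        have hmem := (τ.symm r₀ : {x // x ∈ S}).2
        rw [hd]
        simp only [hmem, dif_pos]
        have h2 : σ ⟨(τ.symm r₀ : {x // x ∈ S}).1, hmem⟩ = r₀ := by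
          have h3 : (⟨(τ.symm r₀ : {x // x ∈ S}).1, hmem⟩ : {x // x ∈ S}) = τ.symm r₀ := rfl
          rw [h3, ← hτσ, Equiv.apply_symm_apply]
        rw [h2]
        ring
    intro z hz
    have := h e hsum z (Finset.mem_union_left S hz)
    simpa [he, hz] using this
  · -- lowPart-indep on Z → v-indep on Z ∪ S
    intro h c hc
    have hsplit : ∑ x ∈ Z, c x • v x + ∑ x ∈ S, c x • v x = 0 := by
      rw [← Finset.sum_union hZS]; exact hc
    have hZzero : ∀ z ∈ Z, c z = 0 := by
      apply h
      funext r'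
      have := congrFun hsplit (Fin.cast (Nat.add_sub_cancel' hp) (Fin.natAdd p₂ r'))
      rw [Pi.add_apply, Pi.zero_apply,
        highS c _ (by simp), add_zero] at this
      rw [Finset.sum_apply, Pi.zero_apply, ← this, Finset.sum_apply]
      rfl
    have hSsum : ∑ x ∈ S, c x • v x = 0 := by
      have hZ0 : ∑ x ∈ Z, c x • v x = 0 :=
        Finset.sum_eq_zero fun x hx => by rw [hZzero x hx, zero_smul]
      rw [hZ0, zero_add] at hsplit; exact hsplit
    intro z hz
    rcases Finset.mem_union.1 hz with hzZ | hzS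
    · exact hZzero z hzZ
    · have := congrFun hSsum (Fin.castLE hp (σ ⟨z, hzS⟩))
      rw [lowS c (σ ⟨z, hzS⟩), Pi.zero_apply] at this
      have hinv : (τ.symm (σ ⟨z, hzS⟩) : {x // x ∈ S}) = ⟨z, hzS⟩ := by
        rw [← hτσ, Equiv.symm_apply_apply]
      rw [hinv] at this
      exact this

/-- Let `M` be a linear matroid of rank `k` represented by a matrix in the block form
`(I, A'; 0, B)` with the identity block on the columns of an independent set `S` of size `p₂`,
and let `L` be a `p₁`-family of sets, each disjoint from `S` and with `X ∪ S` independent in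
`M` (so that `L • {S} = {X ∪ S : X ∈ L}`). If `L̂ ⊆ L` is `(k−p₁−p₂)`-representative for
`L(S) = L` in the contracted matroid `M/S` (represented by `B`), then
`{X ∪ S : X ∈ L̂}` is `(k−p₁−p₂)`-representative for `L • {S}` in `M`. -/
theorem repFam_slice_of_repFam_contract {𝔽 E : Type*} [Field 𝔽] [DecidableEq E]
    {k : ℕ} (p₁ p₂ : ℕ) (hp : p₂ ≤ k) (v : E → Fin k → 𝔽)
    (S : Finset E) (hScard : S.card = p₂)
    (σ : {x // x ∈ S} → Fin p₂) (hσ : Function.Injective σ)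
    (hSform : ∀ (s : E) (hs : s ∈ S),
      v s = fun r : Fin k => if (r : ℕ) = (σ ⟨s, hs⟩ : ℕ) then 1 else 0)
    (L Lhat : Set (Finset E))
    (hL : ∀ X ∈ L, X.card = p₁ ∧ Disjoint X S ∧
      LinearIndependent 𝔽 (fun z : {x // x ∈ X ∪ S} => v z.1))
    (hrep : RepFam
      (fun Z => Disjoint Z S ∧ LinearIndependent 𝔽 (fun z : {x // x ∈ Z} => lowPart p₂ hp v z.1))
      (k - p₁ - p₂) Lhat L) :
    RepFam (fun Z => LinearIndependent 𝔽 (fun z : {x // x ∈ Z} => v z.1)) (k - p₁ - p₂)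
      ((fun X => X ∪ S) '' Lhat) ((fun X => X ∪ S) '' L) := by
  constructor
  · exact Set.image_mono hrep.1
  · rintro Y hYcard ⟨W, ⟨X, hXL, rfl⟩, hdisj, hindep⟩
    obtain ⟨-, hXS, -⟩ := hL X hXL
    have hXY : Disjoint X Y := (Finset.disjoint_union_left.1 hdisj).1
    have hSY : Disjoint S Y := (Finset.disjoint_union_left.1 hdisj).2
    have hXYS : Disjoint (X ∪ Y) S :=
      Finset.disjoint_union_left.2 ⟨hXS, hSY.symm⟩
    have hindep' : LinearIndependent 𝔽
        (fun z : {x // x ∈ (X ∪ Y) ∪ S} => v z.1) := by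
      have hset : (X ∪ Y) ∪ S = (X ∪ S) ∪ Y := Finset.union_right_comm X Y S
      exact hset ▸ hindep
    have hlow : LinearIndependent 𝔽
        (fun z : {x // x ∈ X ∪ Y} => lowPart p₂ hp v z.1) :=
      (key_equiv p₂ hp v S hScard σ hσ hSform (X ∪ Y) hXYS).1 hindep'
    obtain ⟨X', hX'hat, hX'Y, hX'S, hX'low⟩ :=
      hrep.2 Y hYcard ⟨X, hXL, hXY, hXYS, hlow⟩
    have hX'Sdisj : Disjoint X' S := by
      obtain ⟨-, h, -⟩ := hL X' (hrep.1 hX'hat); exact h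
    have hX'YS : Disjoint (X' ∪ Y) S := hX'S
    have hindep'' : LinearIndependent 𝔽
        (fun z : {x // x ∈ (X' ∪ Y) ∪ S} => v z.1) :=
      (key_equiv p₂ hp v S hScard σ hσ hSform (X' ∪ Y) hX'YS).2 hX'low
    refine ⟨X' ∪ S, ⟨X', hX'hat, rfl⟩, ?_, ?_⟩
    · exact Finset.disjoint_union_left.2 ⟨hX'Y, hSY⟩
    · have hset : (X' ∪ S) ∪ Y = (X' ∪ Y) ∪ S := Finset.union_right_comm X' S Y
      exact hset ▸ hindep''
end

section
/- Let G be a graph, X₁ and X₂ vertex sets with E(G[X₁]) ∩ E(G[X₂]) = ∅ whose union covers the edges of G, and Z a separator. If U₁ ⊆ X₁ and U₂ ⊆ X₂ each induce forests and the union of their 'boundary forests' F(G[U₁]) ∪ F(G[U₂] ∖ E(Z)) (spanning forests of the induced component-partitions on Z) is acyclic in the complete graph on Z, then G[U₁ ∪ U₂] is a forest. -/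
open SimpleGraph

namespace ForestGlue

open scoped Classical

variable {V : Type*}

lemma list_getLast_eq {α : Type*} {l l' : List α} {d : α} (hl : l = l' ++ [d]) (h : l ≠ []) :
    l.getLast h = d := by
  subst hl
  simp

lemma concat_last_eq {α : Type*} {l₁ l₂ : List α} {a b : α} (h : l₁ ++ [a] = l₂ ++ [b]) :
    a = b := by
  have h1 : (l₁ ++ [a]).getLast (by simp) = a := list_getLast_eq rfl _
  have h2 : (l₁ ++ [a]).getLast (by simp) = b := list_getLast_eq h _
  exact h1.symm.trans h2

lemma countP_congr' {α : Type*} (l : List α) (p q : α → Bool) (h : ∀ a ∈ l, p a = q a) :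
    l.countP p = l.countP q := by
  induction l with
  | nil => rfl
  | cons a t ih =>
    rw [List.countP_cons, List.countP_cons, h a List.mem_cons_self,
      ih (fun x hx => h x (List.mem_cons_of_mem a hx))]

lemma darts_concat {G : SimpleGraph V} {u v : V} (w : G.Walk u v) :
    w.darts = [] ∨ ∃ l d, w.darts = l ++ [d] ∧ d.toProd.2 = v := by
  induction w with
  | nil => left; rfl
  | @cons a b c hadj p ih =>
    right
    rcases ih with hnil | ⟨l, d, hl, hd⟩
    · refine ⟨[], ⟨(a, b), hadj⟩, ?_, ?_⟩
      · simp [Walk.darts_cons, hnil]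
      · cases p with
        | nil => rfl
        | cons h' p' => simp [Walk.darts_cons] at hnil
    · exact ⟨⟨(a, b), hadj⟩ :: l, d, by rw [Walk.darts_cons, hl]; rfl, hd⟩

lemma support_concat {G : SimpleGraph V} {u v : V} (w : G.Walk u v) :
    ∃ l, w.support = l ++ [v] := by
  induction w with
  | nil => exact ⟨[], rfl⟩
  | @cons a b c hadj p ih =>
    obtain ⟨l, hl⟩ := ih
    exact ⟨a :: l, by rw [Walk.support_cons, hl]; rfl⟩

lemma not_mem_of_concat_nodup {α : Type*} {l l' : List α} {d : α} (hl : l = l' ++ [d])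
    (hn : l.Nodup) : d ∉ l' := by
  subst hl
  rcases List.nodup_append'.mp hn with ⟨-, -, hdisj⟩
  exact fun hmem => hdisj hmem (by simp)

lemma even_countP_mem_edges {G : SimpleGraph V} (x : V) {u v : V} (w : G.Walk u v) :
    (Even (w.edges.countP (fun e => decide (x ∈ e))) ↔ ((x = u) ↔ (x = v))) := by
  induction w with
  | nil => simp
  | @cons a b c hadj p ih =>
    have hne : a ≠ b := hadj.ne
    have hxx : x = x := rfl
    rw [Walk.edges_cons]
    by_cases hx : x ∈ (s(a, b) : Sym2 V)
    · rw [List.countP_cons_of_pos (by simpa using hx), Nat.even_add_one, ih]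
      rcases Sym2.mem_iff.mp hx with rfl | rfl
      · have h2 : ¬ x = b := hne
        tauto
      · have h1 : ¬ x = a := fun hh => hne hh.symm
        tauto
    · rw [List.countP_cons_of_neg (by simpa using hx), ih]
      have h1 : ¬ x = a := fun hh => hx (hh ▸ Sym2.mem_mk_left a b)
      have h2 : ¬ x = b := fun hh => hx (hh ▸ Sym2.mem_mk_right a b)
      tauto

lemma crossing {G : SimpleGraph V} {a b : V} (hab : G.Adj a b)
    (hbr : ¬ (G \ fromEdgeSet {s(a, b)}).Reachable a b) {u v : V} (w : G.Walk u v) :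
    (Even (w.edges.count s(a, b)) ↔
      ((G \ fromEdgeSet {s(a, b)}).Reachable a u ↔ (G \ fromEdgeSet {s(a, b)}).Reachable a v)) := by
  induction w with
  | nil => simp
  | @cons p q r hadj w ih =>
    rw [Walk.edges_cons, List.count_cons]
    simp only [beq_iff_eq]
    by_cases heq : (s(p, q) : Sym2 V) = s(a, b)
    · have hra : (G \ fromEdgeSet {s(a, b)}).Reachable a a := Reachable.refl a
      rw [if_pos heq, Nat.even_add_one, ih]
      rcases Sym2.eq_iff.mp heq with ⟨h1, h2⟩ | ⟨h1, h2⟩ <;> subst h1 <;> subst h2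
      · tauto
      · tauto
    · have hadj' : (G \ fromEdgeSet {s(a, b)}).Adj p q := by
        rw [sdiff_adj]
        refine ⟨hadj, ?_⟩
        rw [fromEdgeSet_adj]
        rintro ⟨hmem, -⟩
        exact heq (Set.mem_singleton_iff.mp hmem)
      have hpq : (G \ fromEdgeSet {s(a, b)}).Reachable a p ↔
          (G \ fromEdgeSet {s(a, b)}).Reachable a q :=
        ⟨fun h => h.trans hadj'.reachable, fun h => h.trans hadj'.symm.reachable⟩
      rw [if_neg heq, add_zero, ih]
      tauto

lemma even_count_closed {G : SimpleGraph V} (hG : G.IsAcyclic) {v : V} (w : G.Walk v v)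
    (e : Sym2 V) : Even (w.edges.count e) := by
  by_cases he : e ∈ G.edgeSet
  · induction e with
    | _ a b =>
      have hab : G.Adj a b := he
      have hbr := (isAcyclic_iff_forall_adj_isBridge.mp hG) hab
      rw [isBridge_iff] at hbr
      exact (crossing hab hbr w).mpr Iff.rfl
  · rw [List.count_eq_zero.mpr (fun hmem => he (Walk.edges_subset_edgeSet w hmem))]
    exact ⟨0, rfl⟩

lemma even_countP_of_even_counts {α : Type*} [DecidableEq α] (p : α → Bool) :
    ∀ (n : ℕ) (l : List α), l.length = n → (∀ e, Even (l.count e)) → Even (l.countP p) := by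
  intro n
  induction n using Nat.strong_induction_on with
  | _ n ih =>
    intro l hlen hcount
    rcases l with - | ⟨a, l'⟩
    · simp
    · have ha : a ∈ l' := by
        rw [← List.count_pos_iff]
        have h1 := hcount a
        simp [List.count_cons] at h1
        rw [Nat.even_iff] at h1
        omega
      have hperm : List.Perm l' (a :: l'.erase a) := List.perm_cons_erase ha
      have hp2 : List.Perm (a :: l') (a :: a :: l'.erase a) := hperm.cons a
      have hlt : (l'.erase a).length < n := by
        have h2 : l'.length + 1 = n := by simpa using hlen
        have h3 := List.length_erase_of_mem ha
        omega
      have hcount'' : ∀ e, Even ((l'.erase a).count e) := by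
        intro e
        have h1 := hcount e
        rw [hp2.count_eq] at h1
        by_cases hea : a = e
        · subst hea
          simp [List.count_cons] at h1 ⊢
          rw [Nat.even_iff] at h1 ⊢
          omega
        · have hne : ¬ (a == e) = true := by simp [hea]
          simp only [List.count_cons, if_neg hne, add_zero] at h1
          exact h1
      have hIH := ih _ hlt (l'.erase a) rfl hcount''
      rw [hp2.countP_eq]
      simp only [List.countP_cons]
      rw [Nat.even_iff] at hIH ⊢
      by_cases hpa : p a <;> simp [hpa] <;> omega

lemma isAcyclic_mono {G H : SimpleGraph V} (hle : G ≤ H) (h : H.IsAcyclic) : G.IsAcyclic := by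
  intro v c hc
  exact h (c.transfer H (fun e he => edgeSet_mono hle (Walk.edges_subset_edgeSet c he)))
    (hc.transfer _)

lemma findBA (S A B : SimpleGraph V)
    (hS : ∀ u v, S.Adj u v → A.Adj u v ∨ B.Adj u v)
    (hnAB : ∀ a b, A.Adj a b → B.Adj a b → False) :
    ∀ {u v : V} (w : S.Walk u v),
      (∃ d ∈ w.darts, B.Adj d.toProd.1 d.toProd.2) →
      (∃ d ∈ w.darts, A.Adj d.toProd.1 d.toProd.2) →
      (∃ (y x z : V) (p : S.Walk u y) (hyx : S.Adj y x) (hxz : S.Adj x z) (q : S.Walk z v),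
          w = p.append (Walk.cons hyx (Walk.cons hxz q)) ∧ B.Adj y x ∧ A.Adj x z)
      ∨ (∃ (v₁ : V) (h : S.Adj u v₁) (w₁ : S.Walk v₁ v), w = Walk.cons h w₁ ∧ A.Adj u v₁ ∧
          ∀ (l : List S.Dart) (d : S.Dart), w.darts = l ++ [d] →
            B.Adj d.toProd.1 d.toProd.2) := by
  intro u v w
  induction w with
  | nil =>
    rintro ⟨d, hd, -⟩ -
    simp [Walk.darts_nil] at hd
  | @cons u m v h w' ih =>
    intro hB hA
    rcases hS u m h with hA0 | hB0
    · -- first dart is A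
      have hBw' : ∃ d ∈ w'.darts, B.Adj d.toProd.1 d.toProd.2 := by
        obtain ⟨d, hd, hdB⟩ := hB
        rcases List.mem_cons.mp (by rwa [Walk.darts_cons] at hd) with rfl | hd'
        · exact absurd hdB (fun hb => hnAB _ _ hA0 hb)
        · exact ⟨d, hd', hdB⟩
      have hw'ne : w'.darts ≠ [] := by
        obtain ⟨d, hd, -⟩ := hBw'
        exact fun hnil => by simp [hnil] at hd
      by_cases hAw' : ∃ d ∈ w'.darts, A.Adj d.toProd.1 d.toProd.2
      · rcases ih hBw' hAw' with ⟨y, x, z, p, hyx, hxz, q, heq, hby, hax⟩ |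
          ⟨v₁, h₁, w₁, heq, hfa, hlb⟩
        · left
          exact ⟨y, x, z, Walk.cons h p, hyx, hxz, q, by rw [heq, Walk.cons_append], hby, hax⟩
        · right
          refine ⟨m, h, w', rfl, hA0, ?_⟩
          intro l d hld
          rw [Walk.darts_cons] at hld
          rcases l with - | ⟨a, t⟩
          · exfalso
            simp at hld
            exact hw'ne (Walk.darts_eq_nil.mpr hld.2)
          · rw [List.cons_append] at hld
            have ht : w'.darts = t ++ [d] := (List.cons.injEq _ _ _ _ ▸ hld).2
            exact hlb t d (by rw [heq] at ht ⊢; exact ht)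
      · -- no A-dart in w', so all darts of w' are B
        right
        refine ⟨m, h, w', rfl, hA0, ?_⟩
        intro l d hld
        rw [Walk.darts_cons] at hld
        rcases l with - | ⟨a, t⟩
        · exfalso
          simp at hld
          exact hw'ne (Walk.darts_eq_nil.mpr hld.2)
        · rw [List.cons_append] at hld
          have ht : w'.darts = t ++ [d] := (List.cons.injEq _ _ _ _ ▸ hld).2
          have hdm : d ∈ w'.darts := by rw [ht]; simp
          rcases hS _ _ d.adj with hda | hdb
          · exact absurd ⟨d, hdm, hda⟩ hAw'
          · exact hdb
    · -- first dart is B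
      have hAw' : ∃ d ∈ w'.darts, A.Adj d.toProd.1 d.toProd.2 := by
        obtain ⟨d, hd, hdA⟩ := hA
        rcases List.mem_cons.mp (by rwa [Walk.darts_cons] at hd) with rfl | hd'
        · exact absurd hdA (fun ha => hnAB _ _ ha hB0)
        · exact ⟨d, hd', hdA⟩
      by_cases hBw' : ∃ d ∈ w'.darts, B.Adj d.toProd.1 d.toProd.2
      · rcases ih hBw' hAw' with ⟨y, x, z, p, hyx, hxz, q, heq, hby, hax⟩ |
          ⟨v₁, h₁, w₁, heq, hfa, hlb⟩
        · left
          exact ⟨y, x, z, Walk.cons h p, hyx, hxz, q, by rw [heq, Walk.cons_append], hby, hax⟩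
        · left
          refine ⟨u, m, v₁, Walk.nil, h, h₁, w₁, ?_, hB0, hfa⟩
          rw [heq]
          rfl
      · -- no B-dart in w'; w' nonempty (has A-dart), all its darts A
        obtain ⟨d0, hd0, hd0A⟩ := hAw'
        cases w' with
        | nil => simp at hd0
        | cons h' w'' =>
          rename_i mm
          have hA' : A.Adj m mm := by
            rcases hS _ _ h' with ha | hb
            · exact ha
            · exact absurd ⟨⟨(m, mm), h'⟩, by simp [Walk.darts_cons], hb⟩ hBw'
          left
          exact ⟨u, m, mm, Walk.nil, h, h', w'', rfl, hB0, hA'⟩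

lemma keyInduction (S A B H₁ H₂ : SimpleGraph V) (Z : Set V) (z₀ : V)
    (hS : ∀ u v, S.Adj u v → A.Adj u v ∨ B.Adj u v)
    (hnAB : ∀ a b, A.Adj a b → B.Adj a b → False)
    (hswitch : ∀ a b c, A.Adj a b → B.Adj a c → a ∈ Z)
    (hz₀ : z₀ ∈ Z)
    (hc₁ : ∀ u v, u ∈ Z → v ∈ Z → A.Reachable u v → H₁.Reachable u v)
    (hc₂ : ∀ u v, u ∈ Z → v ∈ Z → B.Reachable u v → H₂.Reachable u v)
    (hdisj : Disjoint H₁.edgeSet H₂.edgeSet) :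
    ∀ (y zz : V) (w : S.Walk y zz), z₀ = zz → ∀ (x : V) (h : S.Adj x y),
      (∀ (l : List S.Dart) (d : S.Dart), (Walk.cons h w).darts = l ++ [d] →
        B.Adj d.toProd.1 d.toProd.2) →
      z₀ ∉ w.support.dropLast →
      ((A.Adj x y → ∃ z, z ∈ Z ∧ z ≠ z₀ ∧ A.Reachable x z ∧
          ∃ W : (H₁ ⊔ H₂).Walk z z₀,
            Even (W.edges.countP (fun e => decide (e ∈ H₁.edgeSet ∧ z₀ ∈ e)))) ∧
       (B.Adj x y → ∃ z, z ∈ Z ∧ B.Reachable x z ∧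
          ∃ W : (H₁ ⊔ H₂).Walk z z₀,
            Even (W.edges.countP (fun e => decide (e ∈ H₁.edgeSet ∧ z₀ ∈ e))))) := by
  intro y zz w
  induction w with
  | nil =>
    intro hzz x h hlast hfree
    subst hzz
    have hB : B.Adj x z₀ := by
      have := hlast [] ⟨(x, z₀), h⟩ (by simp [Walk.darts_cons, Walk.darts_nil])
      exact this
    constructor
    · intro hA
      exact (hnAB _ _ hA hB).elim
    · intro hBxy
      exact ⟨z₀, hz₀, hB.reachable, Walk.nil, by simp⟩
  | @cons a b c h' w'' ih =>
    intro hzz x h hlast hfree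
    subst hzz
    have hlast' : ∀ (l : List S.Dart) (d : S.Dart), (Walk.cons h' w'').darts = l ++ [d] →
        B.Adj d.toProd.1 d.toProd.2 := by
      intro l d hld
      exact hlast (⟨(x, a), h⟩ :: l) d (by rw [Walk.darts_cons, hld]; rfl)
    have hsup : (Walk.cons h' w'').support.dropLast = a :: w''.support.dropLast := by
      rw [Walk.support_cons]
      cases hW : w''.support with
      | nil => exact absurd hW (Walk.support_ne_nil w'')
      | cons a t => simp
    rw [hsup] at hfree
    have hy0 : a ≠ z₀ := fun hh => hfree (by simp [hh])
    have hfree'' : z₀ ∉ w''.support.dropLast := fun hh => hfree (List.mem_cons_of_mem _ hh)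
    have IH := ih rfl a h' hlast' hfree''
    constructor
    · intro hAxy
      rcases hS a b h' with hA' | hB'
      · obtain ⟨z, hzZ, hzne, hre, W, hW⟩ := IH.1 hA'
        exact ⟨z, hzZ, hzne, hAxy.reachable.trans hre, W, hW⟩
      · have hyZ : a ∈ Z := hswitch a x b hAxy.symm hB'
        obtain ⟨z, hzZ, hre, W, hW⟩ := IH.2 hB'
        obtain ⟨Q⟩ := hc₂ a z hyZ hzZ hre
        have hQe : ∀ e ∈ Q.edges, e ∈ (H₁ ⊔ H₂).edgeSet :=
          fun e he => edgeSet_mono le_sup_right (Walk.edges_subset_edgeSet Q he)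
        refine ⟨a, hyZ, hy0, hAxy.reachable, (Q.transfer _ hQe).append W, ?_⟩
        rw [Walk.edges_append, List.countP_append, Walk.edges_transfer]
        have hzero : Q.edges.countP (fun e => decide (e ∈ H₁.edgeSet ∧ z₀ ∈ e)) = 0 := by
          rw [List.countP_eq_zero]
          intro e he
          simp only [decide_eq_true_eq]
          rintro ⟨h1, -⟩
          exact Set.disjoint_left.mp hdisj h1 (Walk.edges_subset_edgeSet Q he)
        rw [hzero, zero_add]
        exact hW
    · intro hBxy
      rcases hS a b h' with hA' | hB'
      · have hyZ : a ∈ Z := hswitch a b x hA' hBxy.symm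
        obtain ⟨z, hzZ, hzne, hre, W, hW⟩ := IH.1 hA'
        obtain ⟨P⟩ := hc₁ a z hyZ hzZ hre
        have hPe : ∀ e ∈ P.edges, e ∈ (H₁ ⊔ H₂).edgeSet :=
          fun e he => edgeSet_mono le_sup_left (Walk.edges_subset_edgeSet P he)
        refine ⟨a, hyZ, hBxy.reachable, (P.transfer _ hPe).append W, ?_⟩
        rw [Walk.edges_append, List.countP_append, Walk.edges_transfer]
        have hPP : P.edges.countP (fun e => decide (e ∈ H₁.edgeSet ∧ z₀ ∈ e))
            = P.edges.countP (fun e => decide (z₀ ∈ e)) := by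
          apply countP_congr'
          intro e he
          have hmem : e ∈ H₁.edgeSet := Walk.edges_subset_edgeSet P he
          simp [hmem]
        have hPeven : Even (P.edges.countP (fun e => decide (z₀ ∈ e))) := by
          rw [even_countP_mem_edges z₀ P]
          simp [show ¬ z₀ = a from fun hh => hy0 hh.symm,
            show ¬ z₀ = z from fun hh => hzne hh.symm]
        rw [hPP]
        exact hPeven.add hW
      · obtain ⟨z, hzZ, hre, W, hW⟩ := IH.2 hB'
        exact ⟨z, hzZ, hBxy.reachable.trans hre, W, hW⟩

lemma noGoodClosed (S A B H₁ H₂ : SimpleGraph V) (Z : Set V)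
    (hS : ∀ u v, S.Adj u v → A.Adj u v ∨ B.Adj u v)
    (hnAB : ∀ a b, A.Adj a b → B.Adj a b → False)
    (hswitch : ∀ a b c, A.Adj a b → B.Adj a c → a ∈ Z)
    (hc₁ : ∀ u v, u ∈ Z → v ∈ Z → A.Reachable u v → H₁.Reachable u v)
    (hc₂ : ∀ u v, u ∈ Z → v ∈ Z → B.Reachable u v → H₂.Reachable u v)
    (hdisj : Disjoint H₁.edgeSet H₂.edgeSet)
    (hT : (H₁ ⊔ H₂).IsAcyclic) :
    ∀ (z₀ v₁ : V) (h : S.Adj z₀ v₁) (w : S.Walk v₁ z₀), z₀ ∈ Z → A.Adj z₀ v₁ →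
      (∀ (l : List S.Dart) (d : S.Dart), (Walk.cons h w).darts = l ++ [d] →
        B.Adj d.toProd.1 d.toProd.2) →
      z₀ ∉ w.support.dropLast → False := by
  intro z₀ v₁ h w hz₀ hA hlast hfree
  obtain ⟨z, hzZ, hzne, hre, W, hW⟩ :=
    (keyInduction S A B H₁ H₂ Z z₀ hS hnAB hswitch hz₀ hc₁ hc₂ hdisj v₁ z₀ w rfl z₀ h
      hlast hfree).1 hA
  obtain ⟨P⟩ := hc₁ z₀ z hz₀ hzZ hre
  have hPe : ∀ e ∈ P.edges, e ∈ (H₁ ⊔ H₂).edgeSet :=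
    fun e he => edgeSet_mono le_sup_left (Walk.edges_subset_edgeSet P he)
  have heven : Even (((P.transfer _ hPe).append W).edges.countP
      (fun e => decide (e ∈ H₁.edgeSet ∧ z₀ ∈ e))) :=
    even_countP_of_even_counts _ _ _ rfl (fun e => even_count_closed hT _ e)
  rw [Walk.edges_append, List.countP_append, Walk.edges_transfer] at heven
  have hPP : P.edges.countP (fun e => decide (e ∈ H₁.edgeSet ∧ z₀ ∈ e))
      = P.edges.countP (fun e => decide (z₀ ∈ e)) := by
    apply countP_congr'
    intro e he
    have hmem : e ∈ H₁.edgeSet := Walk.edges_subset_edgeSet P he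
    simp [hmem]
  rw [hPP] at heven
  have hodd : ¬ Even (P.edges.countP (fun e => decide (z₀ ∈ e))) := by
    rw [even_countP_mem_edges z₀ P]
    simp [show ¬ z₀ = z from fun hh => hzne hh.symm]
  exact hodd ((Nat.even_add.mp heven).mpr hW)

end ForestGlue

/-- The subgraph of `G` consisting of the edges with both endpoints in `U`
(an induced subgraph, viewed as a graph on the same vertex set). -/
def restrictSet {V : Type*} (G : SimpleGraph V) (U : Set V) : SimpleGraph V where
  Adj u v := G.Adj u v ∧ u ∈ U ∧ v ∈ U
  symm := by
    constructor
    intro u v h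
    exact ⟨h.1.symm, h.2.2, h.2.1⟩
  loopless := by
    constructor
    intro u h
    exact G.irrefl h.1

/-- The subgraph of `G` consisting of the edges with both endpoints in `U` but not both
endpoints in `Z` (i.e. `G[U] ∖ E(Z)`). -/
def restrictSetMinus {V : Type*} (G : SimpleGraph V) (U Z : Set V) : SimpleGraph V where
  Adj u v := G.Adj u v ∧ u ∈ U ∧ v ∈ U ∧ ¬ (u ∈ Z ∧ v ∈ Z)
  symm := by
    constructor
    intro u v h
    exact ⟨h.1.symm, h.2.2.1, h.2.1, fun hc => h.2.2.2 ⟨hc.2, hc.1⟩⟩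
  loopless := by
    constructor
    intro u h
    exact G.irrefl h.1

/-- Let `G` be a graph every edge of which lies inside `X₁` or inside `X₂`, let `U₁ ⊆ X₁`
and `U₂ ⊆ X₂` induce forests, and let `Z = U₁ ∩ (X₁ ∩ X₂) = U₂ ∩ (X₁ ∩ X₂)` be their common
trace on the separator `X₁ ∩ X₂`. Let `H₁` and `H₂` be "boundary forests" on `Z` (forests in
the complete graph on `Z`) such that two vertices of `Z` are connected in `H₁` iff they are
connected in `G[U₁]`, and connected in `H₂` iff they are connected in `G[U₂] ∖ E(Z)`.
If `H₁` and `H₂` are edge-disjoint and their union is acyclic, then `G[U₁ ∪ U₂]` is a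
forest. -/
theorem forest_of_boundary_forests_acyclic {V : Type*} (G : SimpleGraph V)
    (X₁ X₂ Z U₁ U₂ : Set V)
    (hedge : ∀ u v, G.Adj u v → (u ∈ X₁ ∧ v ∈ X₁) ∨ (u ∈ X₂ ∧ v ∈ X₂))
    (hU₁ : U₁ ⊆ X₁) (hU₂ : U₂ ⊆ X₂)
    (hZ₁ : U₁ ∩ (X₁ ∩ X₂) = Z) (hZ₂ : U₂ ∩ (X₁ ∩ X₂) = Z)
    (hF₁ : (restrictSet G U₁).IsAcyclic) (hF₂ : (restrictSet G U₂).IsAcyclic)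
    (H₁ H₂ : SimpleGraph V)
    (hH₁a : H₁.IsAcyclic) (hH₁s : ∀ u v, H₁.Adj u v → u ∈ Z ∧ v ∈ Z)
    (hH₁c : ∀ u v, u ∈ Z → v ∈ Z →
      (H₁.Reachable u v ↔ (restrictSet G U₁).Reachable u v))
    (hH₂a : H₂.IsAcyclic) (hH₂s : ∀ u v, H₂.Adj u v → u ∈ Z ∧ v ∈ Z)
    (hH₂c : ∀ u v, u ∈ Z → v ∈ Z →
      (H₂.Reachable u v ↔ (restrictSetMinus G U₂ Z).Reachable u v))
    (hdisj : Disjoint H₁.edgeSet H₂.edgeSet)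
    (hacyc : (H₁ ⊔ H₂).IsAcyclic) :
    (restrictSet G (U₁ ∪ U₂)).IsAcyclic := by
  classical
  intro v c hc
  have hZU₁ : ∀ a, a ∈ Z → a ∈ U₁ := fun a ha => by rw [← hZ₁] at ha; exact ha.1
  have hZU₂ : ∀ a, a ∈ Z → a ∈ U₂ := fun a ha => by rw [← hZ₂] at ha; exact ha.1
  have hZmem : ∀ a, a ∈ U₁ → a ∈ U₂ → a ∈ Z := fun a h1 h2 => by
    rw [← hZ₁]; exact ⟨h1, hU₁ h1, hU₂ h2⟩
  have hS : ∀ u w, (restrictSet G (U₁ ∪ U₂)).Adj u w →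
      (restrictSet G U₁).Adj u w ∨ (restrictSetMinus G U₂ Z).Adj u w := by
    rintro u w ⟨hG, hu, hw⟩
    have key : (u ∈ U₁ ∧ w ∈ U₁) ∨ (u ∈ U₂ ∧ w ∈ U₂) := by
      rcases hu with hu1 | hu2 <;> rcases hw with hw1 | hw2
      · exact Or.inl ⟨hu1, hw1⟩
      · rcases hedge u w hG with ⟨hx1, hx2⟩ | ⟨hx1, hx2⟩
        · exact Or.inl ⟨hu1, hZU₁ w (by rw [← hZ₂]; exact ⟨hw2, hx2, hU₂ hw2⟩)⟩
        · exact Or.inr ⟨hZU₂ u (by rw [← hZ₁]; exact ⟨hu1, hU₁ hu1, hx1⟩), hw2⟩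
      · rcases hedge u w hG with ⟨hx1, hx2⟩ | ⟨hx1, hx2⟩
        · exact Or.inl ⟨hZU₁ u (by rw [← hZ₂]; exact ⟨hu2, hx1, hU₂ hu2⟩), hw1⟩
        · exact Or.inr ⟨hu2, hZU₂ w (by rw [← hZ₁]; exact ⟨hw1, hU₁ hw1, hx2⟩)⟩
      · exact Or.inr ⟨hu2, hw2⟩
    rcases key with ⟨h1, h2⟩ | ⟨h1, h2⟩
    · exact Or.inl ⟨hG, h1, h2⟩
    · by_cases hZuw : u ∈ Z ∧ w ∈ Z
      · exact Or.inl ⟨hG, hZU₁ u hZuw.1, hZU₁ w hZuw.2⟩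
      · exact Or.inr ⟨hG, h1, h2, hZuw⟩
  have hnAB : ∀ a b, (restrictSet G U₁).Adj a b → (restrictSetMinus G U₂ Z).Adj a b → False :=
    fun a b ha hb => hb.2.2.2 ⟨hZmem a ha.2.1 hb.2.1, hZmem b ha.2.2 hb.2.2.1⟩
  have hswitch : ∀ a b c, (restrictSet G U₁).Adj a b →
      (restrictSetMinus G U₂ Z).Adj a c → a ∈ Z :=
    fun a b c ha hb => hZmem a ha.2.1 hb.2.1
  have hc₁ : ∀ u w, u ∈ Z → w ∈ Z → (restrictSet G U₁).Reachable u w → H₁.Reachable u w :=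
    fun u w hu hw h => (hH₁c u w hu hw).mpr h
  have hc₂ : ∀ u w, u ∈ Z → w ∈ Z → (restrictSetMinus G U₂ Z).Reachable u w →
      H₂.Reachable u w :=
    fun u w hu hw h => (hH₂c u w hu hw).mpr h
  by_cases hBd : ∃ d ∈ c.darts, (restrictSetMinus G U₂ Z).Adj d.toProd.1 d.toProd.2
  · by_cases hAd : ∃ d ∈ c.darts, (restrictSet G U₁).Adj d.toProd.1 d.toProd.2
    · rcases ForestGlue.findBA _ _ _ hS hnAB c hBd hAd with
        ⟨y, x, z, p, hyx, hxz, q, hceq, hByx, hAxz⟩ | ⟨v₁, h₁, w₁, hceq, hfa, hlb⟩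
      · -- a B→A switch: rotate the cycle to start at x
        have hxZ : x ∈ Z := hZmem x hAxz.2.1 hByx.2.2.1
        refine ForestGlue.noGoodClosed _ _ _ H₁ H₂ Z hS hnAB hswitch hc₁ hc₂ hdisj hacyc
          x z hxz (q.append (p.append (Walk.cons hyx Walk.nil))) hxZ hAxz ?_ ?_
        · intro l d hld
          have hdar : (Walk.cons hxz (q.append (p.append (Walk.cons hyx Walk.nil)))).darts
              = (⟨(x, z), hxz⟩ :: (q.darts ++ p.darts)) ++ [⟨(y, x), hyx⟩] := by
            simp [Walk.darts_cons, Walk.darts_append, Walk.darts_nil, List.append_assoc]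
          rw [hdar] at hld
          have hde := ForestGlue.concat_last_eq hld
          rw [← hde]
          exact hByx
        · have hr : (p.append (Walk.cons hyx Walk.nil)).support = p.support ++ [x] := by
            rw [Walk.support_append]
            rfl
          have hr' : (p.append (Walk.cons hyx Walk.nil)).support.tail
              = p.support.tail ++ [x] := by
            rw [Walk.tail_support_append]
            rfl
          have hws : (q.append (p.append (Walk.cons hyx Walk.nil))).support
              = (q.support ++ p.support.tail) ++ [x] := by
            rw [Walk.support_append, hr', List.append_assoc]
          rw [hws, List.dropLast_concat]
          have hnd := hc.support_nodup
          have hcs : c.support.tail = p.support.tail ++ (x :: q.support) := by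
            conv_lhs => rw [hceq]
            rw [Walk.tail_support_append]
            congr 1
          rw [hcs] at hnd
          intro hmem
          rcases List.mem_append.mp hmem with hq | hp
          · rcases List.nodup_append'.mp hnd with ⟨-, h2, -⟩
            exact (List.nodup_cons.mp h2).1 hq
          · rcases List.nodup_append'.mp hnd with ⟨-, -, hdisj2⟩
            exact hdisj2 hp List.mem_cons_self
      · -- the cycle itself starts with an A-dart and ends with a B-dart
        rcases ForestGlue.darts_concat c with hnil | ⟨l, d, hld, hsnd⟩
        · rw [hceq] at hnil; simp [Walk.darts_cons] at hnil
        · have hBlast : (restrictSetMinus G U₂ Z).Adj d.toProd.1 d.toProd.2 := hlb l d hld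
          have hvU₂ : v ∈ U₂ := by
            have h2 := hBlast.2.2.1
            rwa [hsnd] at h2
          have hvZ : v ∈ Z := hZmem v hfa.2.1 hvU₂
          have hfree : v ∉ w₁.support.dropLast := by
            obtain ⟨l₂, hl₂⟩ := ForestGlue.support_concat w₁
            have hnd : w₁.support.Nodup := by
              have hh := hc.support_nodup
              rwa [hceq, Walk.support_cons, List.tail_cons] at hh
            have hv : v ∉ l₂ := ForestGlue.not_mem_of_concat_nodup hl₂ hnd
            rw [hl₂, List.dropLast_concat]
            exact hv
          exact ForestGlue.noGoodClosed _ _ _ H₁ H₂ Z hS hnAB hswitch hc₁ hc₂ hdisj hacyc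
            v v₁ h₁ w₁ hvZ hfa
            (fun l' d' hld' => hlb l' d' (by rw [hceq]; exact hld')) hfree
    · -- every dart of the cycle lies in B
      have hedges : ∀ e ∈ c.edges, e ∈ (restrictSetMinus G U₂ Z).edgeSet := by
        intro e he
        obtain ⟨d, hd, rfl⟩ := List.mem_map.mp he
        rcases hS _ _ d.adj with hA | hB
        · exact absurd ⟨d, hd, hA⟩ hAd
        · exact hB
      have hBacyc : (restrictSetMinus G U₂ Z).IsAcyclic := by
        refine ForestGlue.isAcyclic_mono ?_ hF₂
        intro a b hab
        exact ⟨hab.1, hab.2.1, hab.2.2.1⟩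
      exact hBacyc (c.transfer _ hedges) (hc.transfer _)
  · -- every dart of the cycle lies in A
    have hedges : ∀ e ∈ c.edges, e ∈ (restrictSet G U₁).edgeSet := by
      intro e he
      obtain ⟨d, hd, rfl⟩ := List.mem_map.mp he
      rcases hS _ _ d.adj with hA | hB
      · exact hA
      · exact absurd ⟨d, hd, hB⟩ hBd
    exact hF₁ (c.transfer _ hedges) (hc.transfer _)
end
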